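/- arXiv:2509.24574 — 8 statements merged into one kernel-verified Lean document; each statement's English description precedes it below -/
import Mathlib

section
/- Let L be a Lie algebra and a a Lie subalgebra such that a acts locally nilpotently on the a-module L/a. Let φ: a → C be a Lie algebra homomorphism and V an L-module generated by a nonzero vector w with x.w = φ(x)w for all x ∈ a. Then for every x ∈ a, the operator x − φ(x) acts locally nilpotently on V. -/
/-- Let `L` be a complex Lie algebra, `a` a Lie subalgebra acting locally
nilpotently on the `a`-module `L/a` (for every `y ∈ L` some power of products of
elements of `a` maps `y` into `a`), `φ : a → ℂ` a Lie algebra homomorphism, and `V`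
an `L`-module generated by a nonzero vector `w` with `x·w = φ(x)w` for all `x ∈ a`.
Then for every `x ∈ a` the operator `x − φ(x)` acts locally nilpotently on `V`. -/
theorem stmt3 (L : Type*) [LieRing L] [LieAlgebra ℂ L]
    (a : LieSubalgebra ℂ L)
    (hnil : ∀ y : L, ∃ n : ℕ, ∀ xs : List L, (∀ x ∈ xs, x ∈ a) → xs.length = n →
      xs.foldr (fun x z => ⁅x, z⁆) y ∈ a)
    (φ : a →ₗ[ℂ] ℂ) (hφ : ∀ x y : a, φ ⁅x, y⁆ = 0)
    (V : Type*) [AddCommGroup V] [Module ℂ V] [LieRingModule L V] [LieModule ℂ L V]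
    (w : V) (hw : w ≠ 0)
    (hwh : ∀ x : a, ⁅(x : L), w⁆ = φ x • w)
    (hgen : ∀ W : LieSubmodule ℂ L V, w ∈ W → W = ⊤) :
    ∀ (x : a) (u : V), ∃ n : ℕ,
      (fun z : V => ⁅(x : L), z⁆ - φ x • z)^[n] u = 0 := by
  classical
  intro x u
  -- the operator `T = x - φ(x)` as a linear endomorphism of `V`
  set T : Module.End ℂ V := LieModule.toEnd ℂ L V (x : L) - φ x • 1 with hTdef
  have hT : ∀ v : V, T v = ⁅(x : L), v⁆ - φ x • v := by
    intro v
    simp [hTdef, LieModule.toEnd_apply_apply]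
  -- `d = ad x` on `L`
  set d : L → L := fun y => ⁅(x : L), y⁆ with hd
  have hda : ∀ {z : L}, z ∈ a → d z ∈ a := fun hz => a.lie_mem x.2 hz
  have hdka : ∀ (k : ℕ) {z : L}, z ∈ a → d^[k] z ∈ a := by
    intro k
    induction k with
    | zero => intro z hz; simpa using hz
    | succ k ih =>
        intro z hz
        rw [Function.iterate_succ_apply']
        exact hda (ih hz)
  -- eventually `d^[k] y ∈ a`
  have hevent : ∀ y : L, ∃ N : ℕ, ∀ k, N ≤ k → d^[k] y ∈ a := by
    intro y
    obtain ⟨N, hN⟩ := hnil y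
    have hrep : ∀ (n : ℕ) (y : L),
        (List.replicate n (x : L)).foldr (fun u z => ⁅u, z⁆) y = d^[n] y := by
      intro n
      induction n with
      | zero => intro y; simp
      | succ n ih =>
          intro y
          rw [List.replicate_succ, List.foldr_cons, ih]
          exact (Function.iterate_succ_apply' d n y).symm
    have hbase : d^[N] y ∈ a := by
      have := hN (List.replicate N (x : L))
        (fun x' hx' => by rw [List.eq_of_mem_replicate hx']; exact x.2)
        List.length_replicate
      rwa [hrep] at this
    refine ⟨N, fun k hk => ?_⟩
    obtain ⟨j, rfl⟩ := Nat.exists_eq_add_of_le hk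
    rw [Nat.add_comm, Function.iterate_add_apply]
    exact hdka j hbase
  -- the filtration by length of monomials
  set br : L → V → V := fun y z => ⁅y, z⁆ with hbr
  set W : ℕ → Submodule ℂ V :=
    fun r => Submodule.span ℂ {v | ∃ xs : List L, xs.length ≤ r ∧ xs.foldr br w = v} with hWdef
  have hwW : ∀ r, w ∈ W r := fun r => Submodule.subset_span ⟨[], by simp, rfl⟩
  have hWmono : ∀ {r s : ℕ}, r ≤ s → W r ≤ W s := by
    intro r s hrs
    exact Submodule.span_mono (fun v ⟨xs, h1, h2⟩ => ⟨xs, h1.trans hrs, h2⟩)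
  -- bracketing with any `y : L` raises the filtration by at most one
  have hLW : ∀ (y : L) (r : ℕ) {v : V}, v ∈ W r → ⁅y, v⁆ ∈ W (r + 1) := by
    intro y r v hv
    induction hv using Submodule.span_induction with
    | mem v hv =>
        obtain ⟨xs, h1, h2⟩ := hv
        exact Submodule.subset_span ⟨y :: xs, by simpa using Nat.succ_le_succ h1, by
          rw [List.foldr_cons, h2]⟩
    | zero => simpa using (W (r + 1)).zero_mem
    | add v v' hv hv' ihv ihv' => rw [lie_add]; exact (W (r + 1)).add_mem ihv ihv'
    | smul c v hv ihv => rw [lie_smul]; exact (W (r + 1)).smul_mem c ihv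
  -- bracketing with an element of `a` preserves the filtration
  have haWgen : ∀ {z : L}, z ∈ a → ∀ xs : List L, ⁅z, xs.foldr br w⁆ ∈ W xs.length := by
    intro z hz xs
    induction xs generalizing z with
    | nil =>
        have : ⁅z, w⁆ = φ ⟨z, hz⟩ • w := hwh ⟨z, hz⟩
        simpa [this] using (W 0).smul_mem (φ ⟨z, hz⟩) (hwW 0)
    | cons y ys ih =>
        rw [List.foldr_cons]
        show ⁅z, ⁅y, ys.foldr br w⁆⁆ ∈ W (ys.length + 1)
        rw [leibniz_lie]
        refine (W (ys.length + 1)).add_mem ?_ ?_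
        · exact Submodule.subset_span ⟨⁅z, y⁆ :: ys, le_rfl, rfl⟩
        · exact hLW y ys.length (ih hz)
  have haW : ∀ {z : L}, z ∈ a → ∀ (r : ℕ) {v : V}, v ∈ W r → ⁅z, v⁆ ∈ W r := by
    intro z hz r v hv
    induction hv using Submodule.span_induction with
    | mem v hv =>
        obtain ⟨xs, h1, rfl⟩ := hv
        exact hWmono h1 (haWgen hz xs)
    | zero => simpa using (W r).zero_mem
    | add v v' hv hv' ihv ihv' => rw [lie_add]; exact (W r).add_mem ihv ihv'
    | smul c v hv ihv => rw [lie_smul]; exact (W r).smul_mem c ihv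
  -- `T` preserves the filtration
  have hTW : ∀ (r : ℕ) {v : V}, v ∈ W r → T v ∈ W r := by
    intro r v hv
    rw [hT]
    exact (W r).sub_mem (haW x.2 r hv) ((W r).smul_mem _ hv)
  have hTWpow : ∀ (j r : ℕ) {v : V}, v ∈ W r → (T ^ j) v ∈ W r := by
    intro j
    induction j with
    | zero => intro r v hv; simpa using hv
    | succ j ih =>
        intro r v hv
        rw [pow_succ, Module.End.mul_apply]
        exact ih r (hTW r hv)
  -- stability of vanishing under larger powers
  have hstab : ∀ {v : V} {n : ℕ}, (T ^ n) v = 0 → ∀ {m : ℕ}, n ≤ m → (T ^ m) v = 0 := by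
    intro v n hn m hm
    obtain ⟨j, rfl⟩ := Nat.exists_eq_add_of_le hm
    rw [Nat.add_comm, pow_add, Module.End.mul_apply, hn, map_zero]
  -- main claim: every element of `W r` is killed by a power of `T`
  have main : ∀ r : ℕ, ∀ {v : V}, v ∈ W r → ∃ n : ℕ, (T ^ n) v = 0 := by
    intro r
    induction r with
    | zero =>
        intro v hv
        induction hv using Submodule.span_induction with
        | mem v hv =>
            obtain ⟨xs, h1, rfl⟩ := hv
            rw [Nat.le_zero, List.length_eq_zero_iff] at h1
            subst h1
            refine ⟨1, ?_⟩
            rw [pow_one, hT]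
            show ⁅(x : L), w⁆ - φ x • w = 0
            rw [hwh x, sub_self]
        | zero => exact ⟨0, by simp⟩
        | add v v' hv hv' ihv ihv' =>
            obtain ⟨n, hn⟩ := ihv
            obtain ⟨n', hn'⟩ := ihv'
            exact ⟨max n n', by
              rw [map_add, hstab hn (le_max_left n n'), hstab hn' (le_max_right n n'),
                add_zero]⟩
        | smul c v hv ihv =>
            obtain ⟨n, hn⟩ := ihv
            exact ⟨n, by rw [map_smul, hn, smul_zero]⟩
    | succ r ihr =>
        intro v hv
        induction hv using Submodule.span_induction with
        | mem v hv =>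
            obtain ⟨xs, h1, rfl⟩ := hv
            match xs, h1 with
            | [], _ =>
                refine ⟨1, ?_⟩
                rw [pow_one, hT]
                show ⁅(x : L), w⁆ - φ x • w = 0
                rw [hwh x, sub_self]
            | y :: ys, h1 =>
                have hys : ys.length ≤ r := Nat.lt_succ_iff.mp (Nat.lt_of_lt_of_le
                  (Nat.lt_succ_self _) (by simpa using h1))
                set uu : V := ys.foldr br w with huu
                have huW : uu ∈ W r := Submodule.subset_span ⟨ys, hys, rfl⟩
                obtain ⟨m, hm⟩ := ihr huW
                obtain ⟨N, hNy⟩ := hevent y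
                -- key expansion of `T^n ⁅y, uu⁆`
                have key : ∀ n : ℕ, (T ^ n) ⁅y, uu⁆ ∈ Submodule.span ℂ
                    {v | ∃ k j : ℕ, k + j = n ∧ v = ⁅d^[k] y, (T ^ j) uu⁆} := by
                  intro n
                  induction n with
                  | zero =>
                      exact Submodule.subset_span ⟨0, 0, rfl, by simp⟩
                  | succ n ihn =>
                      rw [pow_succ', Module.End.mul_apply]
                      refine Submodule.span_induction
                        (p := fun v _ => T v ∈ Submodule.span ℂ
                          {v | ∃ k j : ℕ, k + j = n + 1 ∧ v = ⁅d^[k] y, (T ^ j) uu⁆})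
                        ?_ ?_ ?_ ?_ ihn
                      · rintro v ⟨k, j, hkj, rfl⟩
                        have hid : T ⁅d^[k] y, (T ^ j) uu⁆ =
                            ⁅d^[k + 1] y, (T ^ j) uu⁆ + ⁅d^[k] y, (T ^ (j + 1)) uu⁆ := by
                          rw [hT, Function.iterate_succ_apply', pow_succ',
                            Module.End.mul_apply, hT]
                          rw [show ⁅d^[k] y,
                              ⁅(x : L), (T ^ j) uu⁆ - φ x • (T ^ j) uu⁆ =
                              ⁅d^[k] y, ⁅(x : L), (T ^ j) uu⁆⁆
                                - φ x • ⁅d^[k] y, (T ^ j) uu⁆ by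
                            rw [lie_sub, lie_smul]]
                          rw [show ⁅(x : L), ⁅d^[k] y, (T ^ j) uu⁆⁆ =
                              ⁅d (d^[k] y), (T ^ j) uu⁆
                                + ⁅d^[k] y, ⁅(x : L), (T ^ j) uu⁆⁆ from leibniz_lie _ _ _]
                          abel
                        rw [hid]
                        refine Submodule.add_mem _ ?_ ?_
                        · exact Submodule.subset_span ⟨k + 1, j, by omega, rfl⟩
                        · exact Submodule.subset_span ⟨k, j + 1, by omega, rfl⟩
                      · simpa using Submodule.zero_mem _
                      · intro v v' _ _ ihv ihv'
                        rw [map_add]; exact Submodule.add_mem _ ihv ihv'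
                      · intro c v _ ihv
                        rw [map_smul]; exact Submodule.smul_mem _ c ihv
                -- hence `T^(N+m) ⁅y, uu⁆ ∈ W r`
                have hin : (T ^ (N + m)) ⁅y, uu⁆ ∈ W r := by
                  refine Submodule.span_le.mpr ?_ (key (N + m))
                  rintro v ⟨k, j, hkj, rfl⟩
                  by_cases hj : m ≤ j
                  · have : (T ^ j) uu = 0 := hstab hm hj
                    rw [this, lie_zero]
                    exact (W r).zero_mem
                  · have hk : N ≤ k := by omega
                    exact haW (hNy k hk) r (hTWpow j r huW)
                obtain ⟨p, hp⟩ := ihr hin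
                refine ⟨p + (N + m), ?_⟩
                have : ((T ^ p) * (T ^ (N + m))) ⁅y, uu⁆ = 0 := by
                  rw [Module.End.mul_apply, hp]
                rw [← pow_add] at this
                simpa [huu, hbr] using this
        | zero => exact ⟨0, by simp⟩
        | add v v' hv hv' ihv ihv' =>
            obtain ⟨n, hn⟩ := ihv
            obtain ⟨n', hn'⟩ := ihv'
            exact ⟨max n n', by
              rw [map_add, hstab hn (le_max_left n n'), hstab hn' (le_max_right n n'),
                add_zero]⟩
        | smul c v hv ihv =>
            obtain ⟨n, hn⟩ := ihv
            exact ⟨n, by rw [map_smul, hn, smul_zero]⟩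
  -- the union of the `W r` is a Lie submodule containing `w`, hence everything
  have hdir : Directed (· ≤ ·) W := fun i j =>
    ⟨max i j, hWmono (le_max_left i j), hWmono (le_max_right i j)⟩
  let Wsup : LieSubmodule ℂ L V :=
    { (⨆ r, W r : Submodule ℂ V) with
      lie_mem := by
        intro y v hv
        have hv' : v ∈ ⨆ r, W r := hv
        obtain ⟨r, hr⟩ := (Submodule.mem_iSup_of_directed W hdir).mp hv'
        exact le_iSup W (r + 1) (hLW y r hr) }
  have hwWsup : w ∈ Wsup := le_iSup W 0 (hwW 0)
  have htop : Wsup = ⊤ := hgen Wsup hwWsup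
  have hu : u ∈ (⨆ r, W r : Submodule ℂ V) := by
    have : u ∈ Wsup := htop ▸ LieSubmodule.mem_top u
    exact this
  obtain ⟨r, hr⟩ := (Submodule.mem_iSup_of_directed W hdir).mp hu
  obtain ⟨n, hn⟩ := main r hr
  refine ⟨n, ?_⟩
  have hfun : (fun z : V => ⁅(x : L), z⁆ - φ x • z) = ⇑T := by
    funext v
    rw [hT]
  rw [hfun, ← Module.End.pow_apply, hn]
end

section
/- Let L be a Lie algebra and a a Lie subalgebra acting locally nilpotently on L/a, and let V be a Whittaker L-module of type φ. Then every nonzero submodule of V contains a nonzero Whittaker vector of type φ, i.e., a nonzero vector v with x.v = φ(x)v for all x ∈ a. -/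
section Aux

variable {L : Type*} [LieRing L] [LieAlgebra ℂ L]
  {a : LieSubalgebra ℂ L} {φ : a →ₗ[ℂ] ℂ}
  {V : Type*} [AddCommGroup V] [Module ℂ V] [LieRingModule L V] [LieModule ℂ L V]

/-- The `φ`-twisted action of `x ∈ a` on `V`. -/
private def twst (φ : a →ₗ[ℂ] ℂ) (x : a) (v : V) : V := ⁅(x : L), v⁆ - φ x • v

/-- Iterated twisted action along a list. -/
private def tfold (φ : a →ₗ[ℂ] ℂ) (xs : List a) (v : V) : V := xs.foldr (twst φ) v

private lemma twst_add (x : a) (u v : V) :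
    twst φ x (u + v) = twst φ x u + twst φ x v := by
  simp only [twst, lie_add, smul_add]; abel

private lemma twst_smul (x : a) (c : ℂ) (v : V) :
    twst φ x (c • v) = c • twst φ x v := by
  simp only [twst, lie_smul, smul_sub, smul_comm c]

private lemma twst_zero (x : a) : twst φ x (0 : V) = 0 := by
  simp [twst]

private lemma tfold_nil (v : V) : tfold φ ([] : List a) v = v := rfl

private lemma tfold_cons (x : a) (xs : List a) (v : V) :
    tfold φ (x :: xs) v = twst φ x (tfold φ xs v) := rfl

private lemma tfold_concat (x : a) (xs : List a) (v : V) :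
    tfold φ (xs ++ [x]) v = tfold φ xs (twst φ x v) := by
  simp [tfold, List.foldr_append]

private lemma tfold_add (xs : List a) (u v : V) :
    tfold φ xs (u + v) = tfold φ xs u + tfold φ xs v := by
  induction xs with
  | nil => rfl
  | cons x xs ih => simp [tfold_cons, ih, twst_add]

private lemma tfold_smul (xs : List a) (c : ℂ) (v : V) :
    tfold φ xs (c • v) = c • tfold φ xs v := by
  induction xs with
  | nil => rfl
  | cons x xs ih => simp [tfold_cons, ih, twst_smul]

private lemma tfold_zero (xs : List a) : tfold φ xs (0 : V) = 0 := by
  induction xs with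
  | nil => rfl
  | cons x xs ih => simp [tfold_cons, ih, twst_zero]

/-- `Dg φ v d` : every length-`d` twisted fold kills `v`. -/
private def Dg (φ : a →ₗ[ℂ] ℂ) (v : V) (d : ℕ) : Prop :=
  ∀ xs : List a, xs.length = d → tfold φ xs v = 0

private lemma Dg_zero_iff (v : V) : Dg φ v 0 ↔ v = 0 := by
  constructor
  · intro h; simpa [tfold_nil] using h [] rfl
  · rintro rfl xs _; exact tfold_zero xs

private lemma Dg_succ {v : V} {d : ℕ} (h : Dg φ v d) : Dg φ v (d + 1) := by
  intro xs hxs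
  match xs, hxs with
  | x :: xs, hxs =>
    have : xs.length = d := by simpa using hxs
    rw [tfold_cons, h xs this, twst_zero]

private lemma Dg_mono {v : V} {d e : ℕ} (hde : d ≤ e) (h : Dg φ v d) : Dg φ v e := by
  induction e, hde using Nat.le_induction with
  | base => exact h
  | succ e _ ih => exact Dg_succ ih

private lemma Dg_add {u v : V} {d : ℕ} (hu : Dg φ u d) (hv : Dg φ v d) :
    Dg φ (u + v) d := by
  intro xs hxs; rw [tfold_add, hu xs hxs, hv xs hxs, add_zero]

private lemma Dg_smul {v : V} {d : ℕ} (c : ℂ) (hv : Dg φ v d) : Dg φ (c • v) d := by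
  intro xs hxs; rw [tfold_smul, hv xs hxs, smul_zero]

private lemma Dg_twst {v : V} {d : ℕ} (x : a) (hv : Dg φ v (d + 1)) :
    Dg φ (twst φ x v) d := by
  intro xs hxs
  rw [← tfold_concat]
  exact hv (xs ++ [x]) (by simp [hxs])

/-- Twisted Leibniz rule. -/
private lemma twst_lie (x : a) (y : L) (v : V) :
    twst φ x ⁅y, v⁆ = ⁅⁅(x : L), y⁆, v⁆ + ⁅y, twst φ x v⁆ := by
  simp only [twst, lie_sub, lie_smul, leibniz_lie ((x : L)) y v]
  abel

/-- Key lemma: if all length-`n` `a`-brackets of `y` land in `a`, and `v` is killed by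
all length-`d` twisted folds, then `⁅y, v⁆` is killed by all length-`n + d` ones. -/
private lemma key : ∀ n : ℕ, ∀ y : L,
    (∀ xs : List L, (∀ x ∈ xs, x ∈ a) → xs.length = n →
      xs.foldr (fun x z => ⁅x, z⁆) y ∈ a) →
    ∀ d : ℕ, ∀ v : V, Dg φ v d → Dg φ ⁅y, v⁆ (n + d) := by
  intro n
  induction n with
  | zero =>
    intro y hy d v hv
    have hya : y ∈ a := by simpa using hy [] (by simp) rfl
    have hrw : ⁅y, v⁆ = twst φ ⟨y, hya⟩ v + φ ⟨y, hya⟩ • v := by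
      simp [twst]
    rw [Nat.zero_add, hrw]
    exact Dg_add (Dg_twst _ (Dg_succ hv)) (Dg_smul _ hv)
  | succ n ihn =>
    intro y hy d
    induction d with
    | zero =>
      intro v hv
      have : v = 0 := (Dg_zero_iff v).1 hv
      subst this
      intro xs _; rw [lie_zero]; exact tfold_zero xs
    | succ d ihd =>
      intro v hv
      intro xs hxs
      rcases List.eq_nil_or_concat xs with rfl | ⟨xs', x, rfl⟩
      · simp at hxs
      · have hlen : xs'.length = n + 1 + d := by
          simp at hxs; omega
        rw [List.concat_eq_append, tfold_concat, twst_lie]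
        -- first summand : `⁅⁅x, y⁆, v⁆` has degree `n + (d+1)`
        have hxy : ∀ zs : List L, (∀ z ∈ zs, z ∈ a) → zs.length = n →
            zs.foldr (fun x z => ⁅x, z⁆) ⁅(x : L), y⁆ ∈ a := by
          intro zs hzs hlzs
          have : (zs ++ [(x : L)]).foldr (fun x z => ⁅x, z⁆) y ∈ a := by
            apply hy
            · intro z hz
              rcases List.mem_append.1 hz with h | h
              · exact hzs z h
              · simp at h; subst h; exact x.2
            · simp [hlzs]
          simpa [List.foldr_append] using this
        have h1 : Dg φ (⁅⁅(x : L), y⁆, v⁆ : V) (n + (d + 1)) :=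
          ihn ⁅(x : L), y⁆ hxy (d + 1) v hv
        -- second summand : `⁅y, twst x v⁆` has degree `(n+1) + d`
        have h2 : Dg φ (⁅y, twst φ x v⁆ : V) (n + 1 + d) :=
          ihd (twst φ x v) (Dg_twst x hv)
        have h1' : Dg φ (⁅⁅(x : L), y⁆, v⁆ : V) (n + 1 + d) := by
          have : n + (d + 1) = n + 1 + d := by omega
          rwa [this] at h1
        exact Dg_add h1' h2 xs' hlen

private lemma tfold_mem {W : LieSubmodule ℂ L V} {v : V} (hv : v ∈ W) (xs : List a) :
    tfold φ xs v ∈ W := by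
  induction xs with
  | nil => exact hv
  | cons x xs ih =>
    rw [tfold_cons]
    exact W.sub_mem (W.lie_mem ih) (W.smul_mem _ ih)

end Aux

/-- Let `L` be a complex Lie algebra, `a` a subalgebra acting locally
nilpotently on `L/a`, and `V` a Whittaker `L`-module of type `φ` (generated by a
nonzero vector `w` with `x·w = φ(x)w` for `x ∈ a`).  Then every nonzero
`L`-submodule of `V` contains a nonzero Whittaker vector of type `φ`. -/
theorem stmt4 (L : Type*) [LieRing L] [LieAlgebra ℂ L]
    (a : LieSubalgebra ℂ L)
    (hnil : ∀ y : L, ∃ n : ℕ, ∀ xs : List L, (∀ x ∈ xs, x ∈ a) → xs.length = n →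
      xs.foldr (fun x z => ⁅x, z⁆) y ∈ a)
    (φ : a →ₗ[ℂ] ℂ) (hφ : ∀ x y : a, φ ⁅x, y⁆ = 0)
    (V : Type*) [AddCommGroup V] [Module ℂ V] [LieRingModule L V] [LieModule ℂ L V]
    (w : V) (hw : w ≠ 0)
    (hwh : ∀ x : a, ⁅(x : L), w⁆ = φ x • w)
    (hgen : ∀ W : LieSubmodule ℂ L V, w ∈ W → W = ⊤) :
    ∀ W : LieSubmodule ℂ L V, W ≠ ⊥ →
      ∃ u ∈ W, u ≠ 0 ∧ ∀ x : a, ⁅(x : L), u⁆ = φ x • u := by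
  classical
  -- the submodule of uniformly locally twisted-nilpotent vectors
  set N : LieSubmodule ℂ L V :=
    { carrier := {v | ∃ d, Dg φ v d}
      add_mem' := by
        rintro u v ⟨d1, h1⟩ ⟨d2, h2⟩
        exact ⟨max d1 d2, Dg_add (Dg_mono (le_max_left _ _) h1)
          (Dg_mono (le_max_right _ _) h2)⟩
      zero_mem' := ⟨0, (Dg_zero_iff 0).2 rfl⟩
      smul_mem' := by
        rintro c v ⟨d, hd⟩
        exact ⟨d, Dg_smul c hd⟩
      lie_mem := by
        rintro y v ⟨d, hd⟩
        obtain ⟨n, hn⟩ := hnil y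
        exact ⟨n + d, key n y hn d v hd⟩ } with hN
  have hwN : w ∈ N := by
    refine ⟨1, ?_⟩
    intro xs hxs
    match xs, hxs with
    | [x], _ =>
      show twst φ x w = 0
      rw [twst, hwh x, sub_self]
  have hNtop : N = ⊤ := hgen N hwN
  have hall : ∀ v : V, ∃ d, Dg φ v d := by
    intro v
    have : v ∈ N := by rw [hNtop]; trivial
    exact this
  intro W hWne
  obtain ⟨v, hvW, hv0⟩ : ∃ v ∈ W, v ≠ 0 := by
    by_contra h
    push_neg at h
    exact hWne ((LieSubmodule.eq_bot_iff W).2 h)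
  obtain ⟨d0, hd0⟩ := hall v
  -- take the minimal degree
  have hp : ∃ d, Dg φ v d := ⟨d0, hd0⟩
  have hpd : Dg φ v (Nat.find hp) := Nat.find_spec hp
  have hdpos : Nat.find hp ≠ 0 := by
    intro h
    apply hv0
    rw [h] at hpd
    exact (Dg_zero_iff v).1 hpd
  obtain ⟨e, he⟩ : ∃ e, Nat.find hp = e + 1 := ⟨Nat.find hp - 1, by omega⟩
  have hne : ¬ Dg φ v e := Nat.find_min hp (by omega)
  rw [he] at hpd
  rw [Dg] at hne
  push_neg at hne
  obtain ⟨xs, hxslen, hxsne⟩ := hne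
  refine ⟨tfold φ xs v, tfold_mem hvW xs, hxsne, ?_⟩
  intro x
  have : twst φ x (tfold φ xs v) = 0 := by
    have := hpd (x :: xs) (by simp [hxslen])
    rwa [tfold_cons] at this
  rw [twst, sub_eq_zero] at this
  exact this
end

section
/- Let L be a Lie algebra, a a subalgebra acting locally nilpotently on L/a, and V a Whittaker L-module of type φ. If the space of Whittaker vectors V_φ = {v ∈ V : x.v = φ(x)v for all x ∈ a} is one-dimensional, then V is a simple L-module. -/
namespace Stmt5Aux

set_option linter.unusedSectionVars false

variable {L : Type*} [LieRing L] [LieAlgebra ℂ L]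
variable {V : Type*} [AddCommGroup V] [Module ℂ V] [LieRingModule L V] [LieModule ℂ L V]
variable (a : LieSubalgebra ℂ L) (φ : a →ₗ[ℂ] ℂ)

/-- Iterated twisted action of a list of elements of `a`. -/
def tf (xs : List a) (v : V) : V :=
  xs.foldr (fun (x : a) (u : V) => ⁅(x : L), u⁆ - φ x • u) v

@[simp] lemma tf_nil (v : V) : tf a φ [] v = v := rfl

@[simp] lemma tf_cons (x : a) (xs : List a) (v : V) :
    tf a φ (x :: xs) v = ⁅(x : L), tf a φ xs v⁆ - φ x • tf a φ xs v := by
  simp [tf]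

lemma tf_append (xs ys : List a) (v : V) :
    tf a φ (xs ++ ys) v = tf a φ xs (tf a φ ys v) := by
  simp only [tf, List.foldr_append]

@[simp] lemma tf_zero (xs : List a) : tf a φ xs (0 : V) = 0 := by
  induction xs with
  | nil => rfl
  | cons x xs ih => simp [ih]

lemma tf_add (xs : List a) (u v : V) :
    tf a φ xs (u + v) = tf a φ xs u + tf a φ xs v := by
  induction xs with
  | nil => rfl
  | cons x xs ih => simp only [tf_cons, ih, lie_add, smul_add]; abel

lemma tf_smul (xs : List a) (c : ℂ) (v : V) :
    tf a φ xs (c • v) = c • tf a φ xs v := by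
  induction xs with
  | nil => rfl
  | cons x xs ih => simp [ih, lie_smul, smul_sub, smul_comm c]

/-- `v` is killed by every twisted word of length ≥ `n`. -/
def bnd (n : ℕ) (v : V) : Prop :=
  ∀ xs : List a, n ≤ xs.length → tf a φ xs v = 0

lemma bnd_mono {m n : ℕ} (h : m ≤ n) {v : V} (hv : bnd a φ m v) : bnd a φ n v :=
  fun xs hxs => hv xs (h.trans hxs)

lemma bnd_twist {n : ℕ} {v : V} (hv : bnd a φ (n+1) v) (x : a) :
    bnd a φ n (⁅(x : L), v⁆ - φ x • v) := by
  intro xs hxs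
  have h := hv (xs ++ [x]) (by simp; omega)
  rw [tf_append] at h
  simpa using h

/-- Every iterated bracket-word of length ≥ `N` with entries from `a` sends `y` into `a`. -/
def idx (N : ℕ) (y : L) : Prop :=
  ∀ xs : List L, (∀ x ∈ xs, x ∈ a) → N ≤ xs.length →
    xs.foldr (fun x z => ⁅x, z⁆) y ∈ a

lemma idx_zero {y : L} (h : idx a 0 y) : y ∈ a := h [] (by simp) (by simp)

lemma idx_lie {N : ℕ} {y : L} (h : idx a (N+1) y) (x : a) : idx a N ⁅(x : L), y⁆ := by
  intro xs hxs hlen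
  have h2 : (xs ++ [(x : L)]).foldr (fun x z => ⁅x, z⁆) y ∈ a := by
    apply h
    · intro z hz
      rcases List.mem_append.1 hz with hz | hz
      · exact hxs z hz
      · simp only [List.mem_singleton] at hz; subst hz; exact x.2
    · simp; omega
  rwa [List.foldr_append] at h2

lemma foldr_mem {xs : List L} (hxs : ∀ x ∈ xs, x ∈ a) {z : L} (hz : z ∈ a) :
    xs.foldr (fun x z => ⁅x, z⁆) z ∈ a := by
  induction xs with
  | nil => exact hz
  | cons x xs ih =>
    exact a.lie_mem (hxs x (by simp)) (ih fun t ht => hxs t (by simp [ht]))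

lemma idx_exists
    (hnil : ∀ y : L, ∃ n : ℕ, ∀ xs : List L, (∀ x ∈ xs, x ∈ a) → xs.length = n →
      xs.foldr (fun x z => ⁅x, z⁆) y ∈ a) (y : L) : ∃ N, idx a N y := by
  obtain ⟨n, hn⟩ := hnil y
  refine ⟨n, fun xs hxs hlen => ?_⟩
  have hsplit : xs = xs.take (xs.length - n) ++ xs.drop (xs.length - n) :=
    (List.take_append_drop _ _).symm
  rw [hsplit, List.foldr_append]
  apply foldr_mem a (fun t ht => hxs t (List.mem_of_mem_take ht))
  apply hn
  · intro t ht; exact hxs t (List.mem_of_mem_drop ht)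
  · rw [List.length_drop]; omega

/-- Key lemma: uniform twisted nilpotency propagates through the action of any `y : L`. -/
lemma key : ∀ N n (y : L) (v : V), idx a N y → bnd a φ n v → bnd a φ (N + n) ⁅y, v⁆ := by
  intro N
  induction N with
  | zero =>
    intro n y v hy hv
    have hya : y ∈ a := idx_zero a hy
    set x : a := ⟨y, hya⟩ with hxdef
    intro xs hxs
    have hsplit : ⁅y, v⁆ = (⁅(x : L), v⁆ - φ x • v) + φ x • v := by simp; rfl
    rw [hsplit, tf_add, tf_smul]
    have h1 : tf a φ xs (⁅(x : L), v⁆ - φ x • v) = 0 := by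
      have h := hv (xs ++ [x]) (by simp; omega)
      rw [tf_append] at h
      simpa using h
    rw [h1, hv xs (by omega), smul_zero, add_zero]
  | succ N ihN =>
    intro n
    induction n with
    | zero =>
      intro y v hy hv
      have hv0 : v = 0 := by simpa using hv [] (by simp)
      subst hv0
      intro xs hxs; simp
    | succ n ihn =>
      intro y v hy hv
      intro xs hlen
      rcases List.eq_nil_or_concat xs with rfl | ⟨ys, x, rfl⟩
      · simp at hlen
      · rw [List.concat_eq_append] at hlen ⊢
        rw [tf_append]
        have hx : tf a φ [x] ⁅y, v⁆ = ⁅⁅(x : L), y⁆, v⁆ + ⁅y, ⁅(x : L), v⁆ - φ x • v⁆ := by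
          rw [tf_cons, tf_nil, leibniz_lie, lie_sub, lie_smul]
          abel
        rw [hx, tf_add]
        have t1 : bnd a φ (N + (n+1)) ⁅⁅(x : L), y⁆, v⁆ := ihN (n+1) _ v (idx_lie a hy x) hv
        have t2 : bnd a φ (N + 1 + n) ⁅y, ⁅(x : L), v⁆ - φ x • v⁆ :=
          ihn y _ hy (bnd_twist a φ hv x)
        have hys : N + n + 1 ≤ ys.length := by
          simp only [List.length_append, List.length_singleton] at hlen; omega
        rw [t1 ys (by omega), t2 ys (by omega), add_zero]

end Stmt5Aux

/-- Let `L` be a complex Lie algebra, `a` a subalgebra acting locally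
nilpotently on `L/a`, and `V` a Whittaker `L`-module of type `φ`.  If the space of
Whittaker vectors `V_φ = {v : x·v = φ(x)v ∀ x ∈ a}` is one-dimensional, then `V`
is a simple `L`-module. -/
theorem stmt5 (L : Type*) [LieRing L] [LieAlgebra ℂ L]
    (a : LieSubalgebra ℂ L)
    (hnil : ∀ y : L, ∃ n : ℕ, ∀ xs : List L, (∀ x ∈ xs, x ∈ a) → xs.length = n →
      xs.foldr (fun x z => ⁅x, z⁆) y ∈ a)
    (φ : a →ₗ[ℂ] ℂ) (hφ : ∀ x y : a, φ ⁅x, y⁆ = 0)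
    (V : Type*) [AddCommGroup V] [Module ℂ V] [LieRingModule L V] [LieModule ℂ L V]
    (w : V) (hw : w ≠ 0)
    (hwh : ∀ x : a, ⁅(x : L), w⁆ = φ x • w)
    (hgen : ∀ W : LieSubmodule ℂ L V, w ∈ W → W = ⊤)
    (hdim : ∃ v0 : V, v0 ≠ 0 ∧ (∀ x : a, ⁅(x : L), v0⁆ = φ x • v0) ∧
      ∀ u : V, (∀ x : a, ⁅(x : L), u⁆ = φ x • u) → ∃ c : ℂ, u = c • v0) :
    ∀ W : LieSubmodule ℂ L V, W = ⊥ ∨ W = ⊤ := by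
  classical
  intro W
  rcases eq_or_ne W ⊥ with hWbot | hWbot
  · exact Or.inl hWbot
  right
  -- Step 1: every vector of V has a uniform twisted-nilpotency bound.
  have hS : ∀ v : V, ∃ n, Stmt5Aux.bnd a φ n v := by
    let S : LieSubmodule ℂ L V :=
      { carrier := {v | ∃ n, Stmt5Aux.bnd a φ n v}
        add_mem' := by
          rintro u v ⟨n₁, h₁⟩ ⟨n₂, h₂⟩
          refine ⟨max n₁ n₂, fun xs hxs => ?_⟩
          rw [Stmt5Aux.tf_add, h₁ xs (le_trans (le_max_left _ _) hxs),
            h₂ xs (le_trans (le_max_right _ _) hxs), add_zero]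
        zero_mem' := ⟨0, fun xs _ => by simp⟩
        smul_mem' := by
          rintro c v ⟨n, h⟩
          exact ⟨n, fun xs hxs => by rw [Stmt5Aux.tf_smul, h xs hxs, smul_zero]⟩
        lie_mem := by
          rintro y v ⟨n, h⟩
          obtain ⟨N, hN⟩ := Stmt5Aux.idx_exists a hnil y
          exact ⟨N + n, Stmt5Aux.key a φ N n y v hN h⟩ }
    have hwS : w ∈ S := by
      refine ⟨1, fun xs hxs => ?_⟩
      rcases List.eq_nil_or_concat xs with rfl | ⟨ys, x, rfl⟩
      · simp at hxs
      · rw [List.concat_eq_append]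
        rw [Stmt5Aux.tf_append]
        have : Stmt5Aux.tf a φ [x] w = 0 := by
          simp [hwh x]
        rw [this, Stmt5Aux.tf_zero]
    have hStop : S = ⊤ := hgen S hwS
    intro v
    have : v ∈ S := by rw [hStop]; exact LieSubmodule.mem_top v
    exact this
  -- Step 2: any nonzero element of W with a bound yields a Whittaker vector in W.
  have whit : ∀ m (u : V), u ∈ W → u ≠ 0 → Stmt5Aux.bnd a φ m u →
      ∃ u', u' ∈ W ∧ u' ≠ 0 ∧ ∀ x : a, ⁅(x : L), u'⁆ = φ x • u' := by
    intro m
    induction m with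
    | zero =>
      intro u _ hu h0
      exact absurd (by simpa using h0 [] (by simp)) hu
    | succ m ih =>
      intro u huW hu hb
      by_cases hc : ∀ x : a, ⁅(x : L), u⁆ - φ x • u = 0
      · exact ⟨u, huW, hu, fun x => by have := hc x; rwa [sub_eq_zero] at this⟩
      · push_neg at hc
        obtain ⟨x, hx⟩ := hc
        refine ih (⁅(x : L), u⁆ - φ x • u) ?_ hx (Stmt5Aux.bnd_twist a φ hb x)
        exact W.sub_mem (W.lie_mem huW) (W.smul_mem _ huW)
  -- Step 3: extract a nonzero element of W.
  have hex : ∃ v ∈ W, v ≠ 0 := by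
    by_contra h
    push_neg at h
    exact hWbot (LieSubmodule.eq_bot_iff W |>.2 fun m hm => h m hm)
  obtain ⟨v, hvW, hv⟩ := hex
  obtain ⟨n, hn⟩ := hS v
  obtain ⟨u', hu'W, hu'ne, hu'wh⟩ := whit n v hvW hv hn
  -- Step 4: u' is a multiple of v0, hence v0 ∈ W, hence w ∈ W, hence W = ⊤.
  obtain ⟨v0, hv0ne, hv0wh, huniq⟩ := hdim
  obtain ⟨c, hc⟩ := huniq u' hu'wh
  have hcne : c ≠ 0 := by
    rintro rfl
    simp at hc
    exact hu'ne hc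
  have hv0W : v0 ∈ W := by
    have : v0 = c⁻¹ • u' := by rw [hc, smul_smul, inv_mul_cancel₀ hcne, one_smul]
    rw [this]
    exact W.smul_mem _ hu'W
  obtain ⟨c', hc'⟩ := huniq w hwh
  have hwW : w ∈ W := by rw [hc']; exact W.smul_mem _ hv0W
  exact hgen W hwW
end

section
/- Let L be a Lie algebra and a a subalgebra acting locally nilpotently on L/a, and let V be a Whittaker L-module of type φ. If v ∈ V is a nonzero vector satisfying x.v = ψ(x)v for all x ∈ a for some Lie algebra homomorphism ψ: a → C, then ψ = φ. -/
section WhittakerAux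

variable {L : Type*} [LieRing L] [LieAlgebra ℂ L]
variable {V : Type*} [AddCommGroup V] [Module ℂ V] [LieRingModule L V] [LieModule ℂ L V]
variable (a : LieSubalgebra ℂ L) (φ : a →ₗ[ℂ] ℂ)

/-- Action of a word of shifted operators `u ↦ ⁅z,u⁆ - φ z • u`. -/
def actW (l : List a) (u : V) : V :=
  l.foldr (fun (z : a) (u : V) => ⁅(z : L), u⁆ - φ z • u) u

@[simp] lemma actW_nil (u : V) : actW a φ ([] : List a) u = u := rfl

@[simp] lemma actW_cons (z : a) (l : List a) (u : V) :
    actW a φ (z :: l) u = ⁅(z : L), actW a φ l u⁆ - φ z • actW a φ l u := rfl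

lemma actW_append (l₁ l₂ : List a) (u : V) :
    actW a φ (l₁ ++ l₂) u = actW a φ l₁ (actW a φ l₂ u) := by
  simp [actW, List.foldr_append]

@[simp] lemma actW_zero (l : List a) : actW a φ l (0 : V) = 0 := by
  induction l with
  | nil => rfl
  | cons z l ih => simp [ih]

lemma actW_add (l : List a) (u u' : V) :
    actW a φ l (u + u') = actW a φ l u + actW a φ l u' := by
  induction l with
  | nil => rfl
  | cons z l ih => simp only [actW_cons, ih, lie_add, smul_add]; abel

lemma actW_smul (l : List a) (c : ℂ) (u : V) :
    actW a φ l (c • u) = c • actW a φ l u := by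
  induction l with
  | nil => rfl
  | cons z l ih => simp only [actW_cons, ih, lie_smul, smul_sub, smul_comm c]

/-- Iterated bracketing of elements of `a` into `y`. -/
def foldB (xs : List a) (y : L) : L := xs.foldr (fun x z => ⁅(x : L), z⁆) y

lemma foldB_append (xs ys : List a) (y : L) :
    foldB a (xs ++ ys) y = foldB a xs (foldB a ys y) := by
  simp [foldB, List.foldr_append]

lemma actW_main : ∀ N : ℕ, ∀ y : L,
    (∀ xs : List a, xs.length = N → foldB a xs y ∈ a) →
    ∀ (n : ℕ) (u : V), (∀ l : List a, n ≤ l.length → actW a φ l u = 0) →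
    ∀ l : List a, (N + 1) * n ≤ l.length → actW a φ l ⁅y, u⁆ = 0 := by
  intro N
  induction N with
  | zero =>
    intro y hy n u hu l hl
    have hya : y ∈ a := hy [] rfl
    have hrw : ⁅y, u⁆ =
        (⁅((⟨y, hya⟩ : a) : L), u⁆ - φ ⟨y, hya⟩ • u) + φ ⟨y, hya⟩ • u := by
      abel
    rw [hrw, actW_add, actW_smul]
    have h1 : actW a φ l (⁅((⟨y, hya⟩ : a) : L), u⁆ - φ ⟨y, hya⟩ • u)
        = actW a φ (l ++ [⟨y, hya⟩]) u := by
      rw [actW_append]; rfl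
    have hn : n ≤ l.length := by simpa using hl
    rw [h1, hu _ (by simp; omega), hu _ hn, smul_zero, add_zero]
  | succ N IH =>
    intro y hy n
    induction n with
    | zero =>
      intro u hu l _
      have hu0 : u = 0 := by simpa using hu [] (Nat.le_refl 0)
      simp [hu0]
    | succ n IHn =>
      intro u hu l hl
      have hlen : 1 ≤ l.length := le_trans (by nlinarith) hl
      rcases l.eq_nil_or_concat with rfl | ⟨l', z, rfl⟩
      · simp at hlen
      · simp only [List.concat_eq_append] at hl hlen ⊢
        have hll : (l' ++ [z]).length = l'.length + 1 := by simp
        rw [actW_append]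
        have key : actW a φ [z] ⁅y, u⁆
            = ⁅y, actW a φ [z] u⁆ + ⁅⁅(z : L), y⁆, u⁆ := by
          simp only [actW_cons, actW_nil]
          rw [leibniz_lie, lie_sub, lie_smul]
          abel
        rw [key, actW_add]
        have t2 : actW a φ l' ⁅⁅(z : L), y⁆, u⁆ = 0 := by
          apply IH ⁅(z : L), y⁆ ?_ (n + 1) u hu l' ?_
          · intro xs hxs
            have := hy (xs ++ [z]) (by simp [hxs])
            rwa [foldB_append] at this
          · have h2 : (N + 1 + 1) * (n + 1) ≤ l'.length + 1 := by
              rw [hll] at hl; exact hl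
            nlinarith
        have t1 : actW a φ l' ⁅y, actW a φ [z] u⁆ = 0 := by
          apply IHn (actW a φ [z] u) ?_ l' ?_
          · intro l'' hl''
            rw [← actW_append]
            exact hu _ (by simp; omega)
          · have h2 : (N + 1 + 1) * (n + 1) ≤ l'.length + 1 := by
              rw [hll] at hl; exact hl
            nlinarith
        rw [t1, t2, add_zero]

end WhittakerAux

/-- Let `L` be a complex Lie algebra, `a` a subalgebra acting locally
nilpotently on `L/a`, and `V` a Whittaker `L`-module of type `φ`.  If a nonzero
`v ∈ V` satisfies `x·v = ψ(x)v` for all `x ∈ a` for some Lie algebra homomorphism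
`ψ : a → ℂ`, then `ψ = φ`: Whittaker vectors in `V` are all of type `φ`. -/
theorem stmt6 (L : Type*) [LieRing L] [LieAlgebra ℂ L]
    (a : LieSubalgebra ℂ L)
    (hnil : ∀ y : L, ∃ n : ℕ, ∀ xs : List L, (∀ x ∈ xs, x ∈ a) → xs.length = n →
      xs.foldr (fun x z => ⁅x, z⁆) y ∈ a)
    (φ ψ : a →ₗ[ℂ] ℂ) (hφ : ∀ x y : a, φ ⁅x, y⁆ = 0) (hψ : ∀ x y : a, ψ ⁅x, y⁆ = 0)
    (V : Type*) [AddCommGroup V] [Module ℂ V] [LieRingModule L V] [LieModule ℂ L V]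
    (w : V) (hw : w ≠ 0)
    (hwh : ∀ x : a, ⁅(x : L), w⁆ = φ x • w)
    (hgen : ∀ W : LieSubmodule ℂ L V, w ∈ W → W = ⊤)
    (v : V) (hv : v ≠ 0)
    (hwv : ∀ x : a, ⁅(x : L), v⁆ = ψ x • v) :
    ψ = φ := by
  classical
  let W : LieSubmodule ℂ L V :=
    { carrier := {u : V | ∃ n : ℕ, ∀ l : List a, n ≤ l.length → actW a φ l u = 0}
      add_mem' := by
        rintro u u' ⟨n, hn⟩ ⟨m, hm⟩
        exact ⟨max n m, fun l hl => by
          rw [actW_add, hn l (le_trans (le_max_left _ _) hl),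
            hm l (le_trans (le_max_right _ _) hl), add_zero]⟩
      zero_mem' := ⟨0, fun l _ => actW_zero a φ l⟩
      smul_mem' := by
        rintro c u ⟨n, hn⟩
        exact ⟨n, fun l hl => by rw [actW_smul, hn l hl, smul_zero]⟩
      lie_mem := by
        rintro y u ⟨n, hn⟩
        obtain ⟨N, hN⟩ := hnil y
        refine ⟨(N + 1) * n, actW_main a φ N y (fun xs hxs => ?_) n u hn⟩
        have := hN (xs.map Subtype.val)
          (by rintro x hx
              simp only [List.mem_map] at hx
              obtain ⟨⟨x', hx'⟩, -, rfl⟩ := hx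
              exact hx')
          (by simpa using hxs)
        simpa [foldB, List.foldr_map] using this }
  have hwW : w ∈ W := by
    refine ⟨1, fun l hl => ?_⟩
    rcases l.eq_nil_or_concat with rfl | ⟨l', z, rfl⟩
    · simp at hl
    · rw [List.concat_eq_append, actW_append]
      have : actW a φ [z] w = 0 := by
        simp [actW_cons, hwh z]
      rw [this, actW_zero]
  have hvW : v ∈ W := by
    rw [hgen W hwW]; exact LieSubmodule.mem_top v
  obtain ⟨n, hn⟩ := hvW
  have hrep : ∀ (x : a) (k : ℕ),
      actW a φ (List.replicate k x) v = (ψ x - φ x) ^ k • v := by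
    intro x k
    induction k with
    | zero => simp
    | succ k ih =>
      rw [List.replicate_succ, actW_cons, ih, lie_smul, hwv x, smul_smul,
        smul_smul, ← sub_smul, pow_succ]
      congr 1
      ring
  ext x
  have h0 : (ψ x - φ x) ^ n • v = 0 := by
    rw [← hrep x n]
    exact hn _ (by simp)
  have h1 : (ψ x - φ x) ^ n = 0 := (smul_eq_zero.mp h0).resolve_right hv
  have h2 : ψ x - φ x = 0 := by
    by_contra h
    exact pow_ne_zero n h h1
  exact sub_eq_zero.mp h2
end

section
/- Let g = W ⊗ C[t,t^{-1}] be the loop Witt algebra, where W = Der(C[t]) has basis {d_i : i ≥ −1} with [d_n, d_m] = (m−n)d_{n+m}. For a fixed positive integer N, let g_{≥N} = ⊕_{n≥N} d_n ⊗ C[t,t^{-1}]. Then g_{≥N} is a Lie subalgebra of g and the pair (g, g_{≥N}) is a Whittaker pair: g_{≥N} acts locally nilpotently on g/g_{≥N}, and the lower central series of g_{≥N} has trivial intersection. -/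
/-- Let `g` be the loop Witt algebra, presented abstractly as a complex
Lie algebra with basis `{D n k : n ≥ -1, k ∈ ℤ}` (`D n k = d_n ⊗ t^k`) and bracket
`⁅D n k, D m l⁆ = (m-n) D (n+m) (k+l)`.  For a fixed positive integer `N`, the
subspace `g_{≥N} = span{D n k : n ≥ N}` is a Lie subalgebra, it acts locally
nilpotently on `g/g_{≥N}`, and its lower central series has trivial intersection;
i.e. `(g, g_{≥N})` is a Whittaker pair. -/
theorem stmt7 (g : Type*) [LieRing g] [LieAlgebra ℂ g]
    (D : ℤ → ℤ → g)
    (hli : LinearIndependent ℂ (fun p : {q : ℤ × ℤ // -1 ≤ q.1} => D p.1.1 p.1.2))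
    (hspan : Submodule.span ℂ
      (Set.range fun p : {q : ℤ × ℤ // -1 ≤ q.1} => D p.1.1 p.1.2) = ⊤)
    (hbra : ∀ n m k l : ℤ, -1 ≤ n → -1 ≤ m →
      ⁅D n k, D m l⁆ = ((m - n : ℤ) : ℂ) • D (n + m) (k + l))
    (N : ℤ) (hN : 1 ≤ N) :
    let S : Submodule ℂ g := Submodule.span ℂ {x : g | ∃ n k : ℤ, N ≤ n ∧ x = D n k}
    -- `g_{≥N}` is a Lie subalgebra
    (∀ x ∈ S, ∀ y ∈ S, ⁅x, y⁆ ∈ S) ∧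
    -- `g_{≥N}` acts locally nilpotently on `g/g_{≥N}`
    (∀ y : g, ∃ n : ℕ, ∀ xs : List g, (∀ x ∈ xs, x ∈ S) → xs.length = n →
      xs.foldr (fun x z => ⁅x, z⁆) y ∈ S) ∧
    -- the lower central series `a_0 = g_{≥N}`, `a_{i+1} = [g_{≥N}, a_i]` intersects to `0`
    (⨅ i : ℕ, (Nat.rec (motive := fun _ => Submodule ℂ g) S
      (fun _ prev => Submodule.span ℂ {z : g | ∃ x ∈ S, ∃ y ∈ prev, z = ⁅x, y⁆}) i)) = ⊥ := by
  intro S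
  set v : {q : ℤ × ℤ // -1 ≤ q.1} → g := fun p => D p.1.1 p.1.2 with hv
  set A : ℤ → Set {q : ℤ × ℤ // -1 ≤ q.1} := fun m => {p | m ≤ p.1.1} with hA
  set T : ℤ → Submodule ℂ g := fun m => Submodule.span ℂ (v '' A m) with hT
  have hTmono : ∀ m m' : ℤ, m ≤ m' → T m' ≤ T m := by
    intro m m' h
    exact Submodule.span_mono (Set.image_mono (fun p hp => le_trans h hp))
  have hTtop : ∀ x : g, x ∈ T (-1) := by
    intro x
    have hA1 : A (-1) = Set.univ := Set.eq_univ_of_forall (fun p => p.2)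
    have : T (-1) = ⊤ := by
      show Submodule.span ℂ (v '' A (-1)) = ⊤
      rw [hA1, Set.image_univ]; exact hspan
    rw [this]; trivial
  have hS : S = T N := by
    have hset : {x : g | ∃ n k : ℤ, N ≤ n ∧ x = D n k} = v '' A N := by
      ext x
      constructor
      · rintro ⟨n, k, hn, rfl⟩
        exact ⟨⟨(n, k), by simp; linarith⟩, hn, rfl⟩
      · rintro ⟨p, hp, rfl⟩
        exact ⟨p.1.1, p.1.2, hp, rfl⟩
    show Submodule.span ℂ {x : g | ∃ n k : ℤ, N ≤ n ∧ x = D n k} = _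
    rw [hset]
  have hbrk : ∀ m₁ m₂ : ℤ, 1 ≤ m₁ → -1 ≤ m₂ →
      ∀ x ∈ T m₁, ∀ y ∈ T m₂, ⁅x, y⁆ ∈ T (m₁ + m₂) := by
    intro m₁ m₂ h1 h2 x hx
    induction hx using Submodule.span_induction with
    | mem x hxm =>
      obtain ⟨p, hp, rfl⟩ := hxm
      intro y hy
      induction hy using Submodule.span_induction with
      | mem y hym =>
        obtain ⟨q, hq, rfl⟩ := hym
        have hpq : (-1 : ℤ) ≤ p.1.1 + q.1.1 := by
          have := q.2; simp only [hA, Set.mem_setOf_eq] at hp hq; linarith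
        have := hbra p.1.1 q.1.1 p.1.2 q.1.2 p.2 q.2
        show ⁅v p, v q⁆ ∈ _
        simp only [hv]
        rw [this]
        refine Submodule.smul_mem _ _ (Submodule.subset_span ?_)
        refine ⟨⟨(p.1.1 + q.1.1, p.1.2 + q.1.2), hpq⟩, ?_, rfl⟩
        simp only [hA, Set.mem_setOf_eq] at hp hq ⊢
        linarith
      | zero => simp
      | add y z hy hz hy' hz' => rw [lie_add]; exact Submodule.add_mem _ hy' hz'
      | smul c y hy hy' => rw [lie_smul]; exact Submodule.smul_mem _ _ hy'
    | zero => intro y hy; simp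
    | add x z hx hz hx' hz' =>
      intro y hy; rw [add_lie]; exact Submodule.add_mem _ (hx' y hy) (hz' y hy)
    | smul c x hx hx' =>
      intro y hy; rw [smul_lie]; exact Submodule.smul_mem _ _ (hx' y hy)
  refine ⟨?_, ?_, ?_⟩
  · -- subalgebra
    intro x hx y hy
    rw [hS] at hx hy ⊢
    have := hbrk N N hN (by linarith) x hx y hy
    exact hTmono N (N + N) (by linarith) this
  · -- local nilpotency
    intro y
    refine ⟨2, ?_⟩
    intro xs hxs hlen
    obtain ⟨a, b, rfl⟩ := List.length_eq_two.mp hlen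
    have ha : a ∈ T N := hS ▸ hxs a (by simp)
    have hb : b ∈ T N := hS ▸ hxs b (by simp)
    have h1 : ⁅b, y⁆ ∈ T (N + -1) := hbrk N (-1) hN (by norm_num) b hb y (hTtop y)
    have h2 : ⁅a, ⁅b, y⁆⁆ ∈ T (N + (N + -1)) :=
      hbrk N (N + -1) hN (by linarith) a ha _ h1
    rw [hS]
    show ⁅a, ⁅b, y⁆⁆ ∈ T N
    exact hTmono N (N + (N + -1)) (by linarith) h2
  · -- lower central series
    set LCS : ℕ → Submodule ℂ g := fun i => Nat.rec (motive := fun _ => Submodule ℂ g) S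
      (fun _ prev => Submodule.span ℂ {z : g | ∃ x ∈ S, ∃ y ∈ prev, z = ⁅x, y⁆}) i with hLCS
    have hstep : ∀ i : ℕ, LCS i ≤ T ((i + 1) * N) := by
      intro i
      induction i with
      | zero => rw [hLCS]; simp only [Nat.cast_zero, zero_add, one_mul]; exact le_of_eq hS
      | succ j ih =>
        show Submodule.span ℂ {z : g | ∃ x ∈ S, ∃ y ∈ LCS j, z = ⁅x, y⁆} ≤ _
        rw [Submodule.span_le]
        rintro z ⟨x, hx, y, hy, rfl⟩
        have hx' : x ∈ T N := hS ▸ hx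
        have hy' : y ∈ T ((j + 1) * N) := ih hy
        have := hbrk N ((j + 1) * N) hN (by nlinarith [Int.natCast_nonneg j]) x hx' y hy'
        have heq : ((j : ℤ) + 1 + 1) * N = N + ((j : ℤ) + 1) * N := by ring
        have : ⁅x, y⁆ ∈ T (((j : ℕ) + 1 + 1 : ℕ) * N) := by
          push_cast
          rw [heq]
          exact this
        exact this
    have hzero : ∀ x : g, (∀ i : ℕ, x ∈ T ((i + 1) * N)) → x = 0 := by
      intro x hx
      have hx' : x ∈ Submodule.span ℂ (Set.range v) := by rw [hspan]; trivial
      rw [Finsupp.mem_span_range_iff_exists_finsupp] at hx'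
      obtain ⟨c, hc⟩ := hx'
      have hx2 : x ∈ Submodule.span ℂ (v '' ↑c.support) := by
        rw [← hc]
        exact Submodule.sum_mem _ fun p hp =>
          Submodule.smul_mem _ _ (Submodule.subset_span ⟨p, hp, rfl⟩)
      set K : ℕ := c.support.sup (fun p => p.1.1.toNat) + 1 with hK
      have hbound : ∀ p ∈ c.support, p.1.1 < (K : ℤ) := by
        intro p hp
        have h1 : p.1.1 ≤ (p.1.1.toNat : ℤ) := Int.self_le_toNat _
        have h2 : p.1.1.toNat ≤ c.support.sup (fun p => p.1.1.toNat) :=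
          Finset.le_sup (f := fun p => p.1.1.toNat) hp
        have : (p.1.1.toNat : ℤ) ≤ ((c.support.sup fun p => p.1.1.toNat : ℕ) : ℤ) := by
          exact_mod_cast h2
        rw [hK]; push_cast; omega
      have hdisj : Disjoint (A ((K + 1) * N)) (↑c.support : Set _) := by
        rw [Set.disjoint_left]
        intro p hpA hps
        have h1 : ((K : ℤ) + 1) * N ≤ p.1.1 := by
          have := hpA
          simp only [hA, Set.mem_setOf_eq] at this
          push_cast at this ⊢
          exact this
        have h2 := hbound p hps
        nlinarith [Int.natCast_nonneg K]
      have hdisj' := hli.disjoint_span_image hdisj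
      have hx1 : x ∈ T (((K : ℕ) + 1) * N) := hx K
      have : x ∈ (⊥ : Submodule ℂ g) := by
        refine hdisj'.le_bot ⟨?_, hx2⟩
        have : ((((K : ℕ) + 1 : ℕ)) : ℤ) * N = ((K : ℤ) + 1) * N := by push_cast; ring
        rw [← this]
        exact hx1
      simpa using this
    rw [eq_bot_iff]
    intro x hx
    simp only [Submodule.mem_iInf] at hx
    rw [Submodule.mem_bot]
    exact hzero x fun i => hstep i (hx i)
end

section
/- Let ψ: g_{≥N} → C be a Whittaker function with ψ_{2N−1}, ψ_{2N} ∈ E (both exp-polynomial). Then the universal Whittaker module W(g_{≥N}, ψ) = U(g) ⊗_{U(g_{≥N})} C v_ψ over the loop Witt algebra g is reducible. Specifically, if c(t) = Σ_{j=0}^q c_j t^j is a nonzero polynomial of degree q ≥ 1 in Ann(ψ_{2N−1}) ∩ Ann(ψ_{2N}), then u = Σ_{j=0}^q c_j (d_{N−1} ⊗ t^j) v_ψ generates a proper nonzero submodule. -/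
namespace S9
open Finsupp List

noncomputable section

abbrev Lam := Lex (ℤ × ℤ)
def lev (x : Lam) : ℤ := (ofLex x).1
def sec (x : Lam) : ℤ := (ofLex x).2
def rge : Lam → Lam → Prop := fun a b => b ≤ a
instance : DecidableRel rge := fun a b => inferInstanceAs (Decidable (b ≤ a))
instance : IsTotal Lam rge := ⟨fun a b => le_total b a⟩
instance : IsTrans Lam rge := ⟨fun a b c h1 h2 => le_trans h2 h1⟩
instance : IsAntisymm Lam rge := ⟨fun a b h1 h2 => le_antisymm h2 h1⟩

abbrev MG := List Lam →₀ ℂ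
def sg (l : List Lam) : MG := Finsupp.single l 1
def ins (x : Lam) (l : List Lam) : List Lam := List.orderedInsert rge x l
def comb (x h : Lam) : Lam := toLex (lev x + lev h, sec x + sec h)

@[simp] lemma lev_comb (x h : Lam) : lev (comb x h) = lev x + lev h := rfl
@[simp] lemma sec_comb (x h : Lam) : sec (comb x h) = sec x + sec h := rfl
lemma comb_comm (x h : Lam) : comb x h = comb h x := by
  unfold comb; rw [add_comm (lev x), add_comm (sec x)]

variable (N : ℤ) (ψ : ℤ → ℤ → ℂ)

def goodL (l : List Lam) : Prop :=
  l.Pairwise rge ∧ ∀ x ∈ l, -1 ≤ lev x ∧ lev x ≤ N - 1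

def actF : ℕ → Lam → List Lam → MG
  | 0, _, _ => 0
  | _+1, x, [] => if N ≤ lev x then ψ (lev x) (sec x) • sg [] else sg [x]
  | d+1, x, h :: t =>
    if lev x ≤ N - 1 ∧ h ≤ x then sg (x :: h :: t)
    else Finsupp.linearCombination ℂ (actF d h) (actF d x t)
      + ((lev h - lev x : ℤ) : ℂ) •
        (if -1 ≤ lev x + lev h then actF d (comb x h) t else 0)

def A (x : Lam) : MG →ₗ[ℂ] MG :=
  Finsupp.linearCombination ℂ (fun l => actF N ψ (l.length + 1) x l)

def Azn (z : Lam) : MG →ₗ[ℂ] MG := if -1 ≤ lev z then A N ψ z else 0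

def GS (e : ℕ) : Submodule ℂ MG := Finsupp.supported ℂ ℂ {l | goodL N l ∧ l.length ≤ e}
def G : Submodule ℂ MG := Finsupp.supported ℂ ℂ {l | goodL N l}

lemma lc_mem {F : List Lam → MG} {w : MG} {S : Submodule ℂ MG}
    (h : ∀ l ∈ w.support, F l ∈ S) : Finsupp.linearCombination ℂ F w ∈ S := by
  rw [Finsupp.linearCombination_apply]
  exact Submodule.sum_mem S fun l hl => Submodule.smul_mem S _ (h l hl)

@[simp] lemma lc_sg (F : List Lam → MG) (l : List Lam) :
    Finsupp.linearCombination ℂ F (sg l) = F l := by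
  simp [sg, Finsupp.linearCombination_single]

@[simp] lemma A_sg (x : Lam) (l : List Lam) :
    A N ψ x (sg l) = actF N ψ (l.length + 1) x l := by
  simp [A]

lemma sg_mem_GS {l : List Lam} {e : ℕ} (hg : goodL N l) (he : l.length ≤ e) :
    sg l ∈ GS N e := by
  rw [GS, Finsupp.mem_supported]
  intro a ha
  simp only [sg, Finsupp.support_single_ne_zero _ (one_ne_zero), Finset.coe_singleton,
    Set.mem_singleton_iff] at ha
  subst ha; exact ⟨hg, he⟩

lemma GS_mono {e e' : ℕ} (h : e ≤ e') : GS N e ≤ GS N e' :=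
  Finsupp.supported_mono (fun l hl => ⟨hl.1, le_trans hl.2 h⟩)

lemma GS_le_G (e : ℕ) : GS N e ≤ G N :=
  Finsupp.supported_mono (fun l hl => hl.1)

-- basic good facts
lemma goodL_nil : goodL N [] := ⟨List.Pairwise.nil, by simp⟩

lemma goodL_cons {h : Lam} {t : List Lam} (hg : goodL N (h :: t)) : goodL N t :=
  ⟨(List.pairwise_cons.mp hg.1).2, fun x hx => hg.2 x (List.mem_cons_of_mem _ hx)⟩

lemma head_dom {h : Lam} {t : List Lam} (hg : goodL N (h :: t)) : ∀ y ∈ t, y ≤ h :=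
  fun y hy => (List.pairwise_cons.mp hg.1).1 y hy

lemma goodL_ins {x : Lam} {l : List Lam} (hg : goodL N l) (h1 : -1 ≤ lev x)
    (h2 : lev x ≤ N - 1) : goodL N (ins x l) := by
  constructor
  · exact List.Pairwise.orderedInsert (r := rge) x l hg.1
  · intro y hy
    rcases (List.mem_orderedInsert rge).mp hy with h | h
    · subst h; exact ⟨h1, h2⟩
    · exact hg.2 y h

@[simp] lemma ins_length (x : Lam) (l : List Lam) : (ins x l).length = l.length + 1 :=
  List.orderedInsert_length rge l x

lemma goodL_cons_of_dom {x : Lam} {l : List Lam} (hg : goodL N l) (h1 : -1 ≤ lev x)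
    (h2 : lev x ≤ N - 1) (hd : ∀ y ∈ l, y ≤ x) : goodL N (x :: l) := by
  refine ⟨List.pairwise_cons.mpr ⟨hd, hg.1⟩, ?_⟩
  intro y hy
  rcases List.mem_cons.mp hy with h | h
  · subst h; exact ⟨h1, h2⟩
  · exact hg.2 y h

lemma directEval {d : ℕ} {x : Lam} {l : List Lam} (hd : 1 ≤ d) (hx : lev x ≤ N - 1)
    (hdom : ∀ y ∈ l, y ≤ x) : actF N ψ d x l = sg (x :: l) := by
  obtain ⟨e, rfl⟩ : ∃ e, d = e + 1 := ⟨d - 1, by omega⟩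
  cases l with
  | nil =>
    have hnx : ¬ (N ≤ lev x) := by omega
    simp only [actF]
    rw [if_neg hnx]
  | cons h t =>
    have hc : lev x ≤ N - 1 ∧ h ≤ x := ⟨hx, hdom h (List.mem_cons_self)⟩
    simp only [actF]
    rw [if_pos hc]

lemma ins_eq_cons {x : Lam} {l : List Lam} (hdom : ∀ y ∈ l, y ≤ x) :
    ins x l = x :: l := by
  cases l with
  | nil => rfl
  | cons h t => exact List.orderedInsert_cons_of_le (r := rge) t (hdom h (List.mem_cons_self))

lemma ins_of_not_ge {x h : Lam} {t : List Lam} (hxh : ¬ (h ≤ x)) :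
    ins x (h :: t) = h :: ins x t := by
  unfold ins
  rw [List.orderedInsert, if_neg (show ¬ rge x h from hxh)]

lemma lc_congr {F F' : List Lam → MG} {w : MG} (h : ∀ l ∈ w.support, F l = F' l) :
    Finsupp.linearCombination ℂ F w = Finsupp.linearCombination ℂ F' w := by
  rw [Finsupp.linearCombination_apply, Finsupp.linearCombination_apply]
  exact Finsupp.sum_congr fun l hl => by rw [h l hl]

lemma L_mem' (d : ℕ) (l : List Lam) (x : Lam) (hg : goodL N l) (hx : -1 ≤ lev x)
    (hld : l.length < d)
    (h1 : actF N ψ d x l - (if lev x ≤ N - 1 then sg (ins x l) else 0) ∈ GS N l.length) :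
    actF N ψ d x l ∈ GS N (l.length + 1) := by
  have h2 : actF N ψ d x l = (actF N ψ d x l - (if lev x ≤ N - 1 then sg (ins x l) else 0))
      + (if lev x ≤ N - 1 then sg (ins x l) else 0) := by abel
  rw [h2]
  refine Submodule.add_mem _ (GS_mono N (Nat.le_succ _) h1) ?_
  split
  · exact sg_mem_GS N (goodL_ins N hg hx (by assumption)) (by simp)
  · exact Submodule.zero_mem _

lemma L_rest : ∀ d (l : List Lam) (x : Lam), goodL N l → -1 ≤ lev x → l.length < d →
    actF N ψ d x l - (if lev x ≤ N - 1 then sg (ins x l) else 0) ∈ GS N l.length := by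
  intro d
  induction d with
  | zero => intro l x _ _ h; exact absurd h (by omega)
  | succ e IH =>
    intro l x hg hx hld
    cases l with
    | nil =>
      simp only [actF, List.length_nil]
      by_cases hN' : N ≤ lev x
      · rw [if_pos hN', if_neg (by omega)]
        simpa using Submodule.smul_mem _ _ (sg_mem_GS N (goodL_nil N) le_rfl)
      · rw [if_neg hN', if_pos (by omega)]
        have : ins x [] = [x] := rfl
        rw [this]
        simp only [sub_self]
        exact Submodule.zero_mem _
    | cons h t =>
      have hgt := goodL_cons N hg
      have hhd := head_dom N hg
      have hth := hg.2 h (List.mem_cons_self)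
      have hlt : t.length < e := by
        simp only [List.length_cons] at hld; omega
      have he1 : 1 ≤ e := by omega
      by_cases hdir : lev x ≤ N - 1 ∧ h ≤ x
      · simp only [actF]
        rw [if_pos hdir, if_pos hdir.1, ins_eq_cons]
        · simp only [sub_self]
          exact Submodule.zero_mem _
        · intro y hy
          rcases List.mem_cons.mp hy with rfl | hyt
          · exact hdir.2
          · exact le_trans (hhd y hyt) hdir.2
      · simp only [actF]
        rw [if_neg hdir]
        set F := actF N ψ e h with hF
        set Tx := (if lev x ≤ N - 1 then sg (ins x t) else 0) with hTx
        set Rt := actF N ψ e x t - Tx with hRt2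
        have hRt : Rt ∈ GS N t.length := IH t x hgt hx hlt
        have hsplit : actF N ψ e x t = Rt + Tx := by rw [hRt2]; abel
        have hlcT : Finsupp.linearCombination ℂ F Tx
            = (if lev x ≤ N - 1 then sg (ins x (h :: t)) else 0) := by
          by_cases hxl : lev x ≤ N - 1
          · rw [hTx, if_pos hxl, if_pos hxl, lc_sg]
            have hxh : ¬ (h ≤ x) := fun hc => hdir ⟨hxl, hc⟩
            rw [hF, directEval N ψ he1 hth.2 ?dom, ins_of_not_ge hxh]
            case dom =>
              intro y hy
              rcases (List.mem_orderedInsert rge).mp hy with rfl | hyt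
              · exact le_of_lt (lt_of_not_ge hxh)
              · exact hhd y hyt
          · rw [hTx, if_neg hxl, if_neg hxl, map_zero]
        have key : (Finsupp.linearCombination ℂ F (actF N ψ e x t)
              + ((lev h - lev x : ℤ) : ℂ) •
                (if -1 ≤ lev x + lev h then actF N ψ e (comb x h) t else 0))
              - (if lev x ≤ N - 1 then sg (ins x (h :: t)) else 0)
            = Finsupp.linearCombination ℂ F Rt
              + ((lev h - lev x : ℤ) : ℂ) •
                (if -1 ≤ lev x + lev h then actF N ψ e (comb x h) t else 0) := by
          rw [hsplit, map_add, hlcT]; abel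
        rw [key]
        refine Submodule.add_mem _ ?_ ?_
        · refine lc_mem ?_
          intro l' hl'
          have hmem := (Finsupp.mem_supported ℂ Rt).mp hRt hl'
          have hlen := hmem.2
          have := L_mem' N ψ e l' h hmem.1 hth.1 (lt_of_le_of_lt hmem.2 hlt) (IH l' h hmem.1 hth.1 (lt_of_le_of_lt hmem.2 hlt))
          exact GS_mono N (by simp only [List.length_cons]; omega) this
        · refine Submodule.smul_mem _ _ ?_
          by_cases hcb : -1 ≤ lev x + lev h
          · rw [if_pos hcb]
            have := L_mem' N ψ e t (comb x h) hgt (by rw [lev_comb]; exact hcb) hlt (IH t _ hgt (by rw [lev_comb]; exact hcb) hlt)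
            exact GS_mono N (by simp only [List.length_cons]; omega) this
          · rw [if_neg hcb]
            exact Submodule.zero_mem _

lemma L_mem {d : ℕ} {l : List Lam} {x : Lam} (hg : goodL N l) (hx : -1 ≤ lev x)
    (hld : l.length < d) : actF N ψ d x l ∈ GS N (l.length + 1) := by
  have h1 := L_rest N ψ d l x hg hx hld
  have h2 : actF N ψ d x l = (actF N ψ d x l - (if lev x ≤ N - 1 then sg (ins x l) else 0))
      + (if lev x ≤ N - 1 then sg (ins x l) else 0) := by abel
  rw [h2]
  refine Submodule.add_mem _ (GS_mono N (Nat.le_succ _) h1) ?_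
  split
  · exact sg_mem_GS N (goodL_ins N hg hx (by assumption)) (by simp)
  · exact Submodule.zero_mem _

lemma L_stab : ∀ d (l : List Lam) (x : Lam), goodL N l → -1 ≤ lev x → l.length < d →
    actF N ψ d x l = actF N ψ (l.length + 1) x l := by
  intro d
  induction d using Nat.strong_induction_on with
  | _ d IH =>
  intro l x hg hx hld
  by_cases heq : l.length + 1 = d
  · rw [heq]
  obtain ⟨e, rfl⟩ : ∃ e, d = e + 1 := ⟨d - 1, by omega⟩
  have hle : l.length < e := by omega
  cases l with
  | nil => simp only [actF, List.length_nil]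
  | cons h t =>
    have hgt := goodL_cons N hg
    have hhd := head_dom N hg
    have hth := hg.2 h (List.mem_cons_self)
    have htl : t.length < e := by simp only [List.length_cons] at hle; omega
    have he1 : 1 ≤ e := by omega
    simp only [actF, List.length_cons]
    by_cases hdir : lev x ≤ N - 1 ∧ h ≤ x
    · rw [if_pos hdir, if_pos hdir]
    · rw [if_neg hdir, if_neg hdir]
      have hxt : actF N ψ e x t = actF N ψ (t.length + 1) x t :=
        IH e (by omega) t x hgt hx htl
      have hcbt : (if -1 ≤ lev x + lev h then actF N ψ e (comb x h) t else 0)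
          = (if -1 ≤ lev x + lev h then actF N ψ (t.length + 1) (comb x h) t else 0) := by
        by_cases hcb : -1 ≤ lev x + lev h
        · rw [if_pos hcb, if_pos hcb, IH e (by omega) t _ hgt (by rw [lev_comb]; exact hcb) htl]
        · rw [if_neg hcb, if_neg hcb]
      rw [hcbt, hxt]
      congr 1
      refine lc_congr ?_
      intro l' hl'
      -- decompose support of actF (t.length+1) x t
      have hRt := L_rest N ψ (t.length + 1) t x hgt hx (by omega)
      set Tx := (if lev x ≤ N - 1 then sg (ins x t) else 0) with hTxd
      set Rt := actF N ψ (t.length + 1) x t - Tx with hRtd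
      have hsplit : actF N ψ (t.length + 1) x t = Rt + Tx := by rw [hRtd]; abel
      rw [hsplit] at hl'
      rcases Finset.mem_union.mp (Finsupp.support_add hl') with hl1 | hl2
      · have hmem := (Finsupp.mem_supported ℂ Rt).mp hRt hl1
        have hlen := hmem.2
        rw [IH e (by omega) l' h hmem.1 hth.1 (lt_of_le_of_lt hmem.2 htl),
          IH (t.length + 1) (by omega) l' h hmem.1 hth.1 (by omega)]
      · have hxl : lev x ≤ N - 1 := by
          by_contra hc
          rw [hTxd, if_neg hc] at hl2
          simp at hl2
        rw [hTxd, if_pos hxl] at hl2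
        have hl'e : l' = ins x t := by
          have := Finsupp.support_single_subset hl2
          simpa using this
        subst hl'e
        have hxh : ¬ (h ≤ x) := fun hc => hdir ⟨hxl, hc⟩
        have hdom : ∀ y ∈ ins x t, y ≤ h := by
          intro y hy
          rcases (List.mem_orderedInsert rge).mp hy with rfl | hyt
          · exact le_of_lt (lt_of_not_ge hxh)
          · exact hhd y hyt
        rw [directEval N ψ he1 hth.2 hdom, directEval N ψ (by omega) hth.2 hdom]


lemma actF_eq_A {d : ℕ} {l : List Lam} {x : Lam} (hg : goodL N l) (hx : -1 ≤ lev x)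
    (hld : l.length < d) : actF N ψ d x l = A N ψ x (sg l) := by
  rw [A_sg]; exact L_stab N ψ d l x hg hx hld

lemma A_rest {l : List Lam} {x : Lam} (hg : goodL N l) (hx : -1 ≤ lev x) :
    A N ψ x (sg l) - (if lev x ≤ N - 1 then sg (ins x l) else 0) ∈ GS N l.length := by
  rw [A_sg]; exact L_rest N ψ _ l x hg hx (by omega)

lemma A_mem_GS {l : List Lam} {x : Lam} (hg : goodL N l) (hx : -1 ≤ lev x) :
    A N ψ x (sg l) ∈ GS N (l.length + 1) := by
  rw [A_sg]
  exact L_mem N ψ hg hx (by omega)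

lemma A_direct {x : Lam} {l : List Lam} (hx : lev x ≤ N - 1) (hdom : ∀ y ∈ l, y ≤ x) :
    A N ψ x (sg l) = sg (x :: l) := by
  rw [A_sg]; exact directEval N ψ (by omega) hx hdom

lemma ext_on_supp (F F' : MG →ₗ[ℂ] MG) (w : MG) (h : ∀ l ∈ w.support, F (sg l) = F' (sg l)) :
    F w = F' w := by
  have hw : w = w.sum (fun l c => c • sg l) := by
    rw [Finsupp.sum_congr (g2 := fun l c => Finsupp.single l c)]
    · exact (Finsupp.sum_single w).symm
    · intro l _
      rw [sg, Finsupp.smul_single, smul_eq_mul, mul_one]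
  conv_lhs => rw [hw]
  conv_rhs => rw [hw]
  rw [map_finsuppSum, map_finsuppSum]
  exact Finsupp.sum_congr fun l hl => by rw [map_smul, map_smul, h l hl]

lemma Azn_sg_of_le {z : Lam} (hz : -1 ≤ lev z) : Azn N ψ z = A N ψ z := by
  rw [Azn, if_pos hz]

lemma Azn_of_lt {z : Lam} (hz : ¬ -1 ≤ lev z) : Azn N ψ z = 0 := by
  rw [Azn, if_neg hz]

lemma lc_fuel {x h : Lam} {t : List Lam} {d : ℕ} (hgt : goodL N t) (hx : -1 ≤ lev x)
    (hh1 : -1 ≤ lev h) (hh2 : lev h ≤ N - 1) (hhd : ∀ y ∈ t, y ≤ h)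
    (hxh : ¬ (lev x ≤ N - 1 ∧ h ≤ x)) (hd : t.length < d) :
    Finsupp.linearCombination ℂ (actF N ψ d h) (actF N ψ d x t)
      = A N ψ h (A N ψ x (sg t)) := by
  rw [actF_eq_A N ψ hgt hx hd]
  rw [show A N ψ h (A N ψ x (sg t)) = Finsupp.linearCombination ℂ
      (fun l => actF N ψ (l.length + 1) h l) (A N ψ x (sg t)) from rfl]
  refine lc_congr ?_
  intro l' hl'
  have hRt := A_rest N ψ hgt hx
  set Tx := (if lev x ≤ N - 1 then sg (ins x t) else 0) with hTxd
  set Rt := A N ψ x (sg t) - Tx with hRtd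
  have hsplit : A N ψ x (sg t) = Rt + Tx := by rw [hRtd]; abel
  rw [hsplit] at hl'
  rcases Finset.mem_union.mp (Finsupp.support_add hl') with hl1 | hl2
  · have hmem := (Finsupp.mem_supported ℂ Rt).mp hRt hl1
    exact L_stab N ψ d l' h hmem.1 hh1 (lt_of_le_of_lt hmem.2 hd)
  · have hxl : lev x ≤ N - 1 := by
      by_contra hc
      rw [hTxd, if_neg hc] at hl2
      simp at hl2
    rw [hTxd, if_pos hxl] at hl2
    have hl'e : l' = ins x t := by
      have := Finsupp.support_single_subset hl2
      simpa using this
    subst hl'e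
    have hxhl : ¬ (h ≤ x) := fun hc => hxh ⟨hxl, hc⟩
    have hdom : ∀ y ∈ ins x t, y ≤ h := by
      intro y hy
      rcases (List.mem_orderedInsert rge).mp hy with rfl | hyt
      · exact le_of_lt (lt_of_not_ge hxhl)
      · exact hhd y hyt
    rw [directEval N ψ (by omega) hh2 hdom, directEval N ψ (by omega) hh2 hdom]

lemma Azn_sg_t {x h : Lam} (t : List Lam) :
    Azn N ψ (comb x h) (sg t)
      = (if -1 ≤ lev x + lev h then actF N ψ (t.length + 1) (comb x h) t else 0) := by
  rw [Azn, lev_comb]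
  split_ifs with hc
  · rw [A_sg]
  · rfl

lemma peel {x h : Lam} {t : List Lam} (hg : goodL N (h :: t)) (hx : -1 ≤ lev x) :
    A N ψ x (sg (h :: t)) = A N ψ h (A N ψ x (sg t))
      + ((lev h - lev x : ℤ) : ℂ) • Azn N ψ (comb x h) (sg t) := by
  have hgt := goodL_cons N hg
  have hhd := head_dom N hg
  have hth := hg.2 h (List.mem_cons_self)
  by_cases hdir : lev x ≤ N - 1 ∧ h ≤ x
  · -- x direct on h :: t
    have hdomm : ∀ y ∈ h :: t, y ≤ x := by
      intro y hy
      rcases List.mem_cons.mp hy with rfl | hyt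
      · exact hdir.2
      · exact le_trans (hhd y hyt) hdir.2
    rw [A_direct N ψ hdir.1 hdomm, A_direct N ψ hdir.1 (fun y hy => le_trans (hhd y hy) hdir.2)]
    rcases eq_or_lt_of_le hdir.2 with heq | hlt
    · -- h = x
      have hκ : ((lev h - lev x : ℤ) : ℂ) = 0 := by rw [heq]; simp
      rw [hκ, zero_smul, add_zero]
      rw [A_direct N ψ hth.2 ?dom]
      · rw [heq]
      case dom =>
        intro y hy
        rcases List.mem_cons.mp hy with rfl | hyt
        · exact le_of_eq heq.symm
        · exact hhd y hyt
    · -- h < x : unfold A h (sg (x :: t))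
      have hnd : ¬ (lev h ≤ N - 1 ∧ x ≤ h) := fun hc => absurd hc.2 (not_le.mpr hlt)
      rw [A_sg]
      simp only [List.length_cons, actF]
      rw [if_neg hnd]
      have hlc : Finsupp.linearCombination ℂ (actF N ψ (t.length + 1) x) (actF N ψ (t.length + 1) h t)
          = sg (x :: h :: t) := by
        rw [directEval N ψ (by omega) hth.2 hhd, lc_sg,
          directEval N ψ (by omega) hdir.1 hdomm]
      rw [hlc]
      have hAz : (if -1 ≤ lev h + lev x then actF N ψ (t.length + 1) (comb h x) t else 0)
          = Azn N ψ (comb x h) (sg t) := by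
        rw [comb_comm x h, Azn_sg_t N ψ t, add_comm (lev h)]
      rw [hAz]
      have hz : ((lev x - lev h : ℤ) : ℂ) • Azn N ψ (comb x h) (sg t)
          + ((lev h - lev x : ℤ) : ℂ) • Azn N ψ (comb x h) (sg t) = 0 := by
        rw [← add_smul, show ((lev x - lev h : ℤ) : ℂ) + ((lev h - lev x : ℤ) : ℂ) = 0 by
          push_cast; ring]
        rw [zero_smul]
      rw [add_assoc, hz, add_zero]
  · -- nondirect : definitional
    rw [A_sg]
    simp only [List.length_cons, actF]
    rw [if_neg hdir]
    rw [lc_fuel N ψ hgt hx hth.1 hth.2 hhd hdir (by omega), Azn_sg_t]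

lemma J_direct {x z : Lam} {m : List Lam} (hg : goodL N m) (hx : -1 ≤ lev x)
    (hz1 : -1 ≤ lev z) (hz2 : lev z ≤ N - 1) (hdom : ∀ y ∈ m, y ≤ z) :
    A N ψ x (A N ψ z (sg m)) - A N ψ z (A N ψ x (sg m))
      = ((lev z - lev x : ℤ) : ℂ) • Azn N ψ (comb x z) (sg m) := by
  have hzm : goodL N (z :: m) := goodL_cons_of_dom N hg hz1 hz2 hdom
  rw [A_direct N ψ hz2 hdom, peel N ψ hzm hx]
  abel


lemma comb_assoc (a b c : Lam) : comb (comb a b) c = comb a (comb b c) := by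
  simp only [comb, lev, sec, ofLex_toLex]
  rw [add_assoc, add_assoc]

lemma supp_cases {y' : Lam} {t : List Lam} (hgt : goodL N t) (hy' : -1 ≤ lev y')
    {l' : List Lam} (hl' : l' ∈ (A N ψ y' (sg t)).support) :
    (goodL N l' ∧ l'.length ≤ t.length) ∨ (lev y' ≤ N - 1 ∧ l' = ins y' t) := by
  have hRt := A_rest N ψ hgt hy'
  set Ty := (if lev y' ≤ N - 1 then sg (ins y' t) else 0) with hTyd
  set Rt := A N ψ y' (sg t) - Ty with hRtd
  have hsplit : A N ψ y' (sg t) = Rt + Ty := by rw [hRtd]; abel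
  rw [hsplit] at hl'
  rcases Finset.mem_union.mp (Finsupp.support_add hl') with hl1 | hl2
  · exact Or.inl ((Finsupp.mem_supported ℂ Rt).mp hRt hl1)
  · right
    have hyl : lev y' ≤ N - 1 := by
      by_contra hc
      rw [hTyd, if_neg hc] at hl2
      simp at hl2
    rw [hTyd, if_pos hyl] at hl2
    have := Finsupp.support_single_subset hl2
    simp only [Finset.mem_singleton] at this
    exact ⟨hyl, this⟩

lemma jac_nil (hN : 1 ≤ N)
    (hψ : ∀ n m k l : ℤ, N ≤ n → N ≤ m → ((m - n : ℤ) : ℂ) * ψ (n + m) (k + l) = 0)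
    (x y : Lam) (hx : -1 ≤ lev x) (hy : -1 ≤ lev y) :
    A N ψ x (A N ψ y (sg [])) - A N ψ y (A N ψ x (sg []))
      = ((lev y - lev x : ℤ) : ℂ) • Azn N ψ (comb x y) (sg []) := by
  by_cases hyl : lev y ≤ N - 1
  · exact J_direct N ψ (goodL_nil N) hx hy hyl (by simp)
  by_cases hxl : lev x ≤ N - 1
  · have h := J_direct N ψ (m := []) (goodL_nil N) hy hx hxl (by simp)
    rw [comb_comm y x] at h
    have h2 : A N ψ x (A N ψ y (sg [])) - A N ψ y (A N ψ x (sg []))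
        = -(A N ψ y (A N ψ x (sg [])) - A N ψ x (A N ψ y (sg []))) := by abel
    rw [h2, h, ← neg_smul]
    congr 1
    push_cast; ring
  · have hxN : N ≤ lev x := by omega
    have hyN : N ≤ lev y := by omega
    have e1 : A N ψ y (sg []) = ψ (lev y) (sec y) • sg [] := by
      rw [A_sg]; simp only [List.length_nil, actF]; rw [if_pos hyN]
    have e2 : A N ψ x (sg []) = ψ (lev x) (sec x) • sg [] := by
      rw [A_sg]; simp only [List.length_nil, actF]; rw [if_pos hxN]
    rw [e1, e2, map_smul, map_smul, e1, e2, smul_smul, smul_smul, mul_comm]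
    rw [sub_self]
    have hcb : -1 ≤ lev (comb x y) := by rw [lev_comb]; omega
    rw [Azn, if_pos hcb, A_sg]
    simp only [List.length_nil, actF]
    rw [if_pos (show N ≤ lev (comb x y) by rw [lev_comb]; omega)]
    rw [smul_smul, lev_comb, sec_comb, hψ (lev x) (lev y) (sec x) (sec y) hxN hyN, zero_smul]

lemma jacobi (hN : 1 ≤ N)
    (hψ : ∀ n m k l : ℤ, N ≤ n → N ≤ m → ((m - n : ℤ) : ℂ) * ψ (n + m) (k + l) = 0) :
    ∀ (n : ℕ) (m : List Lam), m.length ≤ n → ∀ (x y : Lam), goodL N m →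
      -1 ≤ lev x → -1 ≤ lev y →
      A N ψ x (A N ψ y (sg m)) - A N ψ y (A N ψ x (sg m))
        = ((lev y - lev x : ℤ) : ℂ) • Azn N ψ (comb x y) (sg m) := by
  intro n
  induction n with
  | zero =>
    intro m hm x y _ hx hy
    have : m = [] := List.length_eq_zero_iff.mp (Nat.le_zero.mp hm)
    subst this
    exact jac_nil N ψ hN hψ x y hx hy
  | succ n IH =>
    intro m hm x y hg hx hy
    cases m with
    | nil => exact jac_nil N ψ hN hψ x y hx hy
    | cons h t =>
      have hgt := goodL_cons N hg
      have hhd := head_dom N hg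
      have hth := hg.2 h (List.mem_cons_self)
      have hlt : t.length ≤ n := by simp only [List.length_cons] at hm; omega
      by_cases hyd : lev y ≤ N - 1 ∧ h ≤ y
      · have hdom : ∀ a ∈ h :: t, a ≤ y := by
          intro a ha
          rcases List.mem_cons.mp ha with rfl | h'
          · exact hyd.2
          · exact le_trans (hhd a h') hyd.2
        exact J_direct N ψ hg hx hy hyd.1 hdom
      by_cases hxd : lev x ≤ N - 1 ∧ h ≤ x
      · have hdom : ∀ a ∈ h :: t, a ≤ x := by
          intro a ha
          rcases List.mem_cons.mp ha with rfl | h'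
          · exact hxd.2
          · exact le_trans (hhd a h') hxd.2
        have hJ := J_direct N ψ hg hy hx hxd.1 hdom
        rw [comb_comm y x] at hJ
        have h2 : A N ψ x (A N ψ y (sg (h :: t))) - A N ψ y (A N ψ x (sg (h :: t)))
            = -(A N ψ y (A N ψ x (sg (h :: t))) - A N ψ x (A N ψ y (sg (h :: t)))) := by abel
        rw [h2, hJ, ← neg_smul]
        congr 1
        push_cast; ring
      · -- both nondirect: the main computation
        have IHt : ∀ x' y' : Lam, -1 ≤ lev x' → -1 ≤ lev y' →
            A N ψ x' (A N ψ y' (sg t)) - A N ψ y' (A N ψ x' (sg t))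
              = ((lev y' - lev x' : ℤ) : ℂ) • Azn N ψ (comb x' y') (sg t) :=
          fun x' y' hx' hy' => IH t hlt x' y' hgt hx' hy'
        have SWAP : ∀ z y' : Lam, -1 ≤ lev z → -1 ≤ lev y' → ¬ (lev y' ≤ N - 1 ∧ h ≤ y') →
            A N ψ z (A N ψ h (A N ψ y' (sg t))) - A N ψ h (A N ψ z (A N ψ y' (sg t)))
              = ((lev h - lev z : ℤ) : ℂ) • Azn N ψ (comb z h) (A N ψ y' (sg t)) := by
          intro z y' hz hy' hynd
          have key := ext_on_supp ((A N ψ z) ∘ₗ (A N ψ h) - (A N ψ h) ∘ₗ (A N ψ z))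
            (((lev h - lev z : ℤ) : ℂ) • (Azn N ψ (comb z h))) (A N ψ y' (sg t)) ?_
          · simpa using key
          intro l' hl'
          simp only [LinearMap.sub_apply, LinearMap.comp_apply, LinearMap.smul_apply]
          rcases supp_cases N ψ hgt hy' hl' with ⟨hgl', hll'⟩ | ⟨hyl', rfl⟩
          · exact IH l' (le_trans hll' hlt) z h hgl' hz hth.1
          · have hyh : ¬ (h ≤ y') := fun hc => hynd ⟨hyl', hc⟩
            have hdom : ∀ a ∈ ins y' t, a ≤ h := by
              intro a ha
              rcases (List.mem_orderedInsert rge).mp ha with rfl | hat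
              · exact le_of_lt (lt_of_not_ge hyh)
              · exact hhd a hat
            exact J_direct N ψ (goodL_ins N hgt hy' hyl') hz hth.1 hth.2 hdom
        -- peel both
        have e1 := peel N ψ (x := y) hg hy
        have e2 := peel N ψ (x := x) hg hx
        rw [e1, e2, map_add, map_add, map_smul, map_smul]
        have S1 : A N ψ x (A N ψ h (A N ψ y (sg t)))
            = ((lev h - lev x : ℤ) : ℂ) • Azn N ψ (comb x h) (A N ψ y (sg t))
              + A N ψ h (A N ψ x (A N ψ y (sg t))) :=
          sub_eq_iff_eq_add.mp (SWAP x y hx hy hyd)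
        have S2 : A N ψ y (A N ψ h (A N ψ x (sg t)))
            = ((lev h - lev y : ℤ) : ℂ) • Azn N ψ (comb y h) (A N ψ x (sg t))
              + A N ψ h (A N ψ y (A N ψ x (sg t))) :=
          sub_eq_iff_eq_add.mp (SWAP y x hy hx hxd)
        rw [S1, S2]
        -- now the three groups
        have G1 : A N ψ x (A N ψ y (sg t)) - A N ψ y (A N ψ x (sg t))
            = ((lev y - lev x : ℤ) : ℂ) • Azn N ψ (comb x y) (sg t) := IHt x y hx hy
        have G2 : ((lev h - lev x : ℤ) : ℂ) •
              (Azn N ψ (comb x h) (A N ψ y (sg t)) - A N ψ y (Azn N ψ (comb x h) (sg t)))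
            = (((lev h - lev x : ℤ) : ℂ) * (-(((lev x + lev h) - lev y : ℤ) : ℂ))) •
              Azn N ψ (comb (comb x y) h) (sg t) := by
          by_cases hc : -1 ≤ lev x + lev h
          · have hc' : -1 ≤ lev (comb x h) := by rw [lev_comb]; exact hc
            rw [Azn_sg_of_le N ψ hc']
            have hIH := IHt y (comb x h) hy hc'
            rw [show comb y (comb x h) = comb (comb x y) h by
                rw [← comb_assoc, comb_comm y x], lev_comb] at hIH
            have h3 : A N ψ (comb x h) (A N ψ y (sg t)) - A N ψ y (A N ψ (comb x h) (sg t))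
                = -(A N ψ y (A N ψ (comb x h) (sg t)) - A N ψ (comb x h) (A N ψ y (sg t))) := by
              abel
            rw [h3, hIH, smul_neg, smul_smul, ← neg_smul]
            congr 1
            push_cast; ring
          · have hz : ((lev h - lev x : ℤ) : ℂ) = 0 := by
              have : lev x = -1 ∧ lev h = -1 := by constructor <;> omega
              rw [this.1, this.2]; simp
            rw [hz, zero_smul, zero_mul, zero_smul]
        have G3 : ((lev h - lev y : ℤ) : ℂ) •
              (A N ψ x (Azn N ψ (comb y h) (sg t)) - Azn N ψ (comb y h) (A N ψ x (sg t)))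
            = (((lev h - lev y : ℤ) : ℂ) * ((((lev y + lev h) - lev x : ℤ)) : ℂ)) •
              Azn N ψ (comb (comb x y) h) (sg t) := by
          by_cases hc : -1 ≤ lev y + lev h
          · have hc' : -1 ≤ lev (comb y h) := by rw [lev_comb]; exact hc
            rw [Azn_sg_of_le N ψ hc']
            have hIH := IHt x (comb y h) hx hc'
            rw [← comb_assoc, lev_comb] at hIH
            rw [hIH, smul_smul]
          · have hz : ((lev h - lev y : ℤ) : ℂ) = 0 := by
              have : lev y = -1 ∧ lev h = -1 := by constructor <;> omega
              rw [this.1, this.2]; simp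
            rw [hz, zero_smul, zero_mul, zero_smul]
        have hAznpeel : ((lev y - lev x : ℤ) : ℂ) • Azn N ψ (comb x y) (sg (h :: t))
            = ((lev y - lev x : ℤ) : ℂ) • A N ψ h (Azn N ψ (comb x y) (sg t))
              + (((lev y - lev x : ℤ) : ℂ) * ((lev h - (lev x + lev y) : ℤ) : ℂ)) •
                Azn N ψ (comb (comb x y) h) (sg t) := by
          by_cases hc : -1 ≤ lev x + lev y
          · have hc' : -1 ≤ lev (comb x y) := by rw [lev_comb]; exact hc
            rw [Azn_sg_of_le N ψ hc', peel N ψ hg hc']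
            rw [smul_add, smul_smul, lev_comb]
          · have hz : ((lev y - lev x : ℤ) : ℂ) = 0 := by
              have : lev x = -1 ∧ lev y = -1 := by constructor <;> omega
              rw [this.1, this.2]; simp
            rw [hz, zero_smul, zero_smul, zero_mul, zero_smul, zero_add]
        rw [hAznpeel]
        -- final algebra
        have lhs_eq : (((lev h - lev x : ℤ) : ℂ) • Azn N ψ (comb x h) (A N ψ y (sg t))
              + A N ψ h (A N ψ x (A N ψ y (sg t)))
              + ((lev h - lev y : ℤ) : ℂ) • A N ψ x (Azn N ψ (comb y h) (sg t)))
            - (((lev h - lev y : ℤ) : ℂ) • Azn N ψ (comb y h) (A N ψ x (sg t))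
              + A N ψ h (A N ψ y (A N ψ x (sg t)))
              + ((lev h - lev x : ℤ) : ℂ) • A N ψ y (Azn N ψ (comb x h) (sg t)))
            = A N ψ h (A N ψ x (A N ψ y (sg t)) - A N ψ y (A N ψ x (sg t)))
              + ((lev h - lev x : ℤ) : ℂ) •
                  (Azn N ψ (comb x h) (A N ψ y (sg t)) - A N ψ y (Azn N ψ (comb x h) (sg t)))
              + ((lev h - lev y : ℤ) : ℂ) •
                  (A N ψ x (Azn N ψ (comb y h) (sg t)) - Azn N ψ (comb y h) (A N ψ x (sg t))) := by
          rw [map_sub, smul_sub, smul_sub]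
          abel
        rw [lhs_eq, G1, G2, G3, map_smul]
        rw [add_assoc, ← add_smul]
        congr 1
        push_cast
        ring


lemma sg_mem_G {l : List Lam} (hg : goodL N l) : sg l ∈ G N := by
  rw [G, Finsupp.mem_supported]
  intro a ha
  simp only [sg, Finsupp.support_single_ne_zero _ (one_ne_zero), Finset.coe_singleton,
    Set.mem_singleton_iff] at ha
  subst ha; exact hg

lemma A_mem_G {x : Lam} (hx : -1 ≤ lev x) {w : MG} (hw : w ∈ G N) :
    A N ψ x w ∈ G N := by
  refine lc_mem ?_
  intro l hl
  have hg := (Finsupp.mem_supported ℂ w).mp hw hl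
  exact GS_le_G N _ (L_mem N ψ hg hx (by omega))

lemma A_mem_GS_mod {x : Lam} (hx : -1 ≤ lev x) {e : ℕ} {w : MG} (hw : w ∈ GS N e) :
    A N ψ x w ∈ GS N (e + 1) := by
  refine lc_mem ?_
  intro l hl
  have hg := (Finsupp.mem_supported ℂ w).mp hw hl
  have hlen := hg.2
  exact GS_mono N (by omega) (L_mem N ψ hg.1 hx (by omega))

lemma A_nil_high {x : Lam} (hx : N ≤ lev x) :
    A N ψ x (sg []) = ψ (lev x) (sec x) • sg [] := by
  rw [A_sg]; simp only [List.length_nil, actF]; rw [if_pos hx]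

lemma jacobi_mod (hN : 1 ≤ N)
    (hψ : ∀ n m k l : ℤ, N ≤ n → N ≤ m → ((m - n : ℤ) : ℂ) * ψ (n + m) (k + l) = 0)
    {x y : Lam} (hx : -1 ≤ lev x) (hy : -1 ≤ lev y) {w : MG} (hw : w ∈ G N) :
    A N ψ x (A N ψ y w) - A N ψ y (A N ψ x w)
      = ((lev y - lev x : ℤ) : ℂ) • Azn N ψ (comb x y) w := by
  have key := ext_on_supp ((A N ψ x) ∘ₗ (A N ψ y) - (A N ψ y) ∘ₗ (A N ψ x))
    (((lev y - lev x : ℤ) : ℂ) • (Azn N ψ (comb x y))) w ?_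
  · simpa using key
  intro l hl
  have hg := (Finsupp.mem_supported ℂ w).mp hw hl
  simp only [LinearMap.sub_apply, LinearMap.comp_apply, LinearMap.smul_apply]
  exact jacobi N ψ hN hψ l.length l le_rfl x y hg hx hy

variable (q : ℕ) (c : ℕ → ℂ)

def ng (j : ℕ) : Lam := toLex (N - 1, (j : ℤ))
@[simp] lemma lev_ng (j : ℕ) : lev (ng N j) = N - 1 := rfl
@[simp] lemma sec_ng (j : ℕ) : sec (ng N j) = (j : ℤ) := rfl

lemma good_ng (hN : 1 ≤ N) (j : ℕ) : goodL N [ng N j] := by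
  refine ⟨List.pairwise_singleton _ _, ?_⟩
  intro x hx
  simp only [List.mem_singleton] at hx
  subst hx
  constructor <;> [skip; exact le_refl _]
  rw [lev_ng]; omega

def uE : MG := ∑ j ∈ Finset.range (q + 1), c j • sg [ng N j]
def actL : List Lam → MG := fun l => l.foldr (fun z w => A N ψ z w) (uE N q c)
def phiE : MG →ₗ[ℂ] MG := Finsupp.linearCombination ℂ (actL N ψ q c)

@[simp] lemma phiE_sg (l : List Lam) : phiE N ψ q c (sg l) = actL N ψ q c l := lc_sg _ _

@[simp] lemma actL_nil : actL N ψ q c [] = uE N q c := rfl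

@[simp] lemma actL_cons (h : Lam) (t : List Lam) :
    actL N ψ q c (h :: t) = A N ψ h (actL N ψ q c t) := rfl

lemma uE_mem (hN : 1 ≤ N) : uE N q c ∈ G N := by
  refine Submodule.sum_mem _ fun j _ => Submodule.smul_mem _ _ ?_
  exact sg_mem_G N (good_ng N hN j)

lemma actL_mem (hN : 1 ≤ N) : ∀ l : List Lam, (∀ x ∈ l, -1 ≤ lev x) →
    actL N ψ q c l ∈ G N := by
  intro l
  induction l with
  | nil => intro _; exact uE_mem N q c hN
  | cons h t IH =>
    intro hl
    rw [actL_cons]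
    exact A_mem_G N ψ (hl h (List.mem_cons_self))
      (IH fun x hx => hl x (List.mem_cons_of_mem _ hx))

lemma uE_whit (hN : 1 ≤ N)
    (hA : ∀ s k : ℤ, N ≤ s → ∑ j ∈ Finset.range (q + 1), c j * ψ (s + (N - 1)) (k + j) = 0)
    {x : Lam} (hx : N ≤ lev x) :
    A N ψ x (uE N q c) = ψ (lev x) (sec x) • uE N q c := by
  have hx1 : -1 ≤ lev x := by omega
  unfold uE
  rw [map_sum]
  have hterm : ∀ j ∈ Finset.range (q + 1), A N ψ x (c j • sg [ng N j])
      = c j • (ψ (lev x) (sec x) • sg [ng N j])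
        + (c j * (((N - 1 - lev x : ℤ) : ℂ) * ψ (lev x + (N - 1)) (sec x + j))) • sg [] := by
    intro j _
    rw [map_smul, peel N ψ (good_ng N hN j) hx1, A_nil_high N ψ hx, map_smul,
      A_direct N ψ (by rw [lev_ng]) (by simp)]
    have hcb : -1 ≤ lev (comb x (ng N j)) := by
      rw [lev_comb, lev_ng]; omega
    rw [Azn, if_pos hcb, A_nil_high N ψ (by rw [lev_comb, lev_ng]; omega)]
    rw [lev_comb, sec_comb, lev_ng, sec_ng]
    rw [smul_add, smul_smul, smul_smul, smul_smul]
    ring_nf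
  rw [Finset.sum_congr rfl hterm, Finset.sum_add_distrib, ← Finset.sum_smul]
  have hz : (∑ j ∈ Finset.range (q + 1),
      c j * (((N - 1 - lev x : ℤ) : ℂ) * ψ (lev x + (N - 1)) (sec x + j))) = 0 := by
    have := hA (lev x) (sec x) hx
    calc (∑ j ∈ Finset.range (q + 1),
        c j * (((N - 1 - lev x : ℤ) : ℂ) * ψ (lev x + (N - 1)) (sec x + j)))
        = ((N - 1 - lev x : ℤ) : ℂ) * ∑ j ∈ Finset.range (q + 1),
            c j * ψ (lev x + (N - 1)) (sec x + j) := by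
          rw [Finset.mul_sum]
          refine Finset.sum_congr rfl fun j _ => by ring
      _ = 0 := by rw [this, mul_zero]
  rw [hz, zero_smul, add_zero, Finset.smul_sum]
  refine Finset.sum_congr rfl fun j _ => ?_
  rw [smul_smul, smul_smul, mul_comm]

lemma Csingle (hN : 1 ≤ N)
    (hψ : ∀ n m k l : ℤ, N ≤ n → N ≤ m → ((m - n : ℤ) : ℂ) * ψ (n + m) (k + l) = 0)
    (hA : ∀ s k : ℤ, N ≤ s → ∑ j ∈ Finset.range (q + 1), c j * ψ (s + (N - 1)) (k + j) = 0) :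
    ∀ (n : ℕ) (l : List Lam), l.length ≤ n → goodL N l → ∀ x : Lam, -1 ≤ lev x →
      phiE N ψ q c (A N ψ x (sg l)) = A N ψ x (actL N ψ q c l) := by
  intro n
  induction n with
  | zero =>
    intro l hl hg x hx
    have : l = [] := List.length_eq_zero_iff.mp (Nat.le_zero.mp hl)
    subst this
    by_cases hxl : lev x ≤ N - 1
    · rw [A_direct N ψ hxl (by simp), phiE_sg]
      rfl
    · rw [A_nil_high N ψ (by omega), map_smul, phiE_sg, actL_nil,
        uE_whit N ψ q c hN hA (by omega)]
  | succ n IH =>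
    intro l hl hg x hx
    cases l with
    | nil =>
      by_cases hxl : lev x ≤ N - 1
      · rw [A_direct N ψ hxl (by simp), phiE_sg]
        rfl
      · rw [A_nil_high N ψ (by omega), map_smul, phiE_sg, actL_nil,
          uE_whit N ψ q c hN hA (by omega)]
    | cons h t =>
      have hgt := goodL_cons N hg
      have hhd := head_dom N hg
      have hth := hg.2 h (List.mem_cons_self)
      have hlt : t.length ≤ n := by simp only [List.length_cons] at hl; omega
      by_cases hdir : lev x ≤ N - 1 ∧ h ≤ x
      · have hdom : ∀ a ∈ h :: t, a ≤ x := by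
          intro a ha
          rcases List.mem_cons.mp ha with rfl | h'
          · exact hdir.2
          · exact le_trans (hhd a h') hdir.2
        rw [A_direct N ψ hdir.1 hdom, phiE_sg]
        rfl
      · rw [peel N ψ hg hx, map_add, map_smul]
        -- term1 : phiE (A h (A x (sg t))) = A h (phiE (A x (sg t)))
        have hterm1 : phiE N ψ q c (A N ψ h (A N ψ x (sg t)))
            = A N ψ h (phiE N ψ q c (A N ψ x (sg t))) := by
          have key := ext_on_supp ((phiE N ψ q c) ∘ₗ (A N ψ h))
            ((A N ψ h) ∘ₗ (phiE N ψ q c)) (A N ψ x (sg t)) ?_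
          · simpa using key
          intro l' hl'
          simp only [LinearMap.comp_apply]
          rcases supp_cases N ψ hgt hx hl' with ⟨hgl', hll'⟩ | ⟨hxl', rfl⟩
          · rw [IH l' (le_trans hll' hlt) hgl' h hth.1, phiE_sg]
          · have hxh : ¬ (h ≤ x) := fun hc => hdir ⟨hxl', hc⟩
            have hdom : ∀ a ∈ ins x t, a ≤ h := by
              intro a ha
              rcases (List.mem_orderedInsert rge).mp ha with rfl | hat
              · exact le_of_lt (lt_of_not_ge hxh)
              · exact hhd a hat
            rw [A_direct N ψ hth.2 hdom, phiE_sg, phiE_sg]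
            rfl
        have hterm2 : phiE N ψ q c (Azn N ψ (comb x h) (sg t))
            = Azn N ψ (comb x h) (actL N ψ q c t) := by
          by_cases hcb : -1 ≤ lev (comb x h)
          · rw [Azn_sg_of_le N ψ hcb]
            exact IH t hlt hgt (comb x h) hcb
          · rw [Azn_of_lt N ψ hcb]
            simp
        rw [hterm1, IH t hlt hgt x hx, hterm2, actL_cons]
        have hW : actL N ψ q c t ∈ G N :=
          actL_mem N ψ q c hN t (fun a ha => (hgt.2 a ha).1)
        have hJ := jacobi_mod N ψ hN hψ hx hth.1 hW
        rw [sub_eq_iff_eq_add.mp hJ]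
        abel


lemma Cmod (hN : 1 ≤ N)
    (hψ : ∀ n m k l : ℤ, N ≤ n → N ≤ m → ((m - n : ℤ) : ℂ) * ψ (n + m) (k + l) = 0)
    (hA : ∀ s k : ℤ, N ≤ s → ∑ j ∈ Finset.range (q + 1), c j * ψ (s + (N - 1)) (k + j) = 0)
    {x : Lam} (hx : -1 ≤ lev x) {w : MG} (hw : w ∈ G N) :
    phiE N ψ q c (A N ψ x w) = A N ψ x (phiE N ψ q c w) := by
  have key := ext_on_supp ((phiE N ψ q c) ∘ₗ (A N ψ x)) ((A N ψ x) ∘ₗ (phiE N ψ q c)) w ?_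
  · simpa using key
  intro l hl
  have hg := (Finsupp.mem_supported ℂ w).mp hw hl
  simp only [LinearMap.comp_apply]
  rw [Csingle N ψ q c hN hψ hA l.length l le_rfl hg x hx, phiE_sg]

lemma phiE_mem (hN : 1 ≤ N) {w : MG} (hw : w ∈ G N) : phiE N ψ q c w ∈ G N := by
  refine lc_mem ?_
  intro l hl
  have hg := (Finsupp.mem_supported ℂ w).mp hw hl
  exact actL_mem N ψ q c hN l fun a ha => (hg.2 a ha).1

lemma ins_ins {h z : Lam} {t : List Lam} (hg : goodL N (h :: t)) :
    ins h (ins z t) = ins z (h :: t) := by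
  have hst : t.Pairwise rge := (goodL_cons N hg).1
  refine (fun hp h1 h2 => List.Perm.eq_of_pairwise' (r := rge) h1 h2 hp) ?_ ?_ ?_
  · refine ((List.perm_orderedInsert rge h (ins z t)).trans ?_).trans
      (List.perm_orderedInsert rge z (h :: t)).symm
    refine List.Perm.trans (List.Perm.cons h (List.perm_orderedInsert rge z t)) ?_
    exact List.Perm.swap z h t
  · exact List.Pairwise.orderedInsert (r := rge) h _
      (List.Pairwise.orderedInsert (r := rge) z t hst)
  · exact List.Pairwise.orderedInsert (r := rge) z _ hg.1

lemma TT (hN : 1 ≤ N) : ∀ l : List Lam, goodL N l →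
    phiE N ψ q c (sg l) - (∑ j ∈ Finset.range (q + 1), c j • sg (ins (ng N j) l))
      ∈ GS N l.length := by
  intro l
  induction l with
  | nil =>
    intro _
    rw [phiE_sg, actL_nil]
    have he : ∀ j : ℕ, ins (ng N j) ([] : List Lam) = [ng N j] := fun _ => rfl
    simp only [he]
    rw [show uE N q c = ∑ j ∈ Finset.range (q + 1), c j • sg [ng N j] from rfl, sub_self]
    exact Submodule.zero_mem _
  | cons h t IH =>
    intro hg
    have hgt := goodL_cons N hg
    have hth := hg.2 h (List.mem_cons_self)
    have hR := IH hgt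
    set Rt := phiE N ψ q c (sg t)
      - (∑ j ∈ Finset.range (q + 1), c j • sg (ins (ng N j) t)) with hRtd
    have hstep : phiE N ψ q c (sg (h :: t)) = A N ψ h (phiE N ψ q c (sg t)) := by
      rw [phiE_sg, phiE_sg, actL_cons]
    have hexp : phiE N ψ q c (sg t)
        = Rt + ∑ j ∈ Finset.range (q + 1), c j • sg (ins (ng N j) t) := by
      rw [hRtd]; abel
    rw [hstep, hexp, map_add, map_sum]
    have hsum : ∀ j ∈ Finset.range (q + 1),
        A N ψ h (c j • sg (ins (ng N j) t)) = c j • A N ψ h (sg (ins (ng N j) t)) :=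
      fun j _ => map_smul _ _ _
    rw [Finset.sum_congr rfl hsum]
    have key : (A N ψ h Rt
          + ∑ j ∈ Finset.range (q + 1), c j • A N ψ h (sg (ins (ng N j) t)))
        - (∑ j ∈ Finset.range (q + 1), c j • sg (ins (ng N j) (h :: t)))
        = A N ψ h Rt + ∑ j ∈ Finset.range (q + 1),
            c j • (A N ψ h (sg (ins (ng N j) t)) - sg (ins h (ins (ng N j) t))) := by
      have hci : ∀ j : ℕ, ins (ng N j) (h :: t) = ins h (ins (ng N j) t) :=
        fun j => (ins_ins N hg).symm
      simp only [hci, smul_sub, Finset.sum_sub_distrib]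
      abel
    rw [key]
    refine Submodule.add_mem _ ?_ ?_
    · have := A_mem_GS_mod N ψ hth.1 hR
      exact GS_mono N (by simp only [List.length_cons]; omega) this
    · refine Submodule.sum_mem _ fun j _ => Submodule.smul_mem _ _ ?_
      have hgins : goodL N (ins (ng N j) t) :=
        goodL_ins N hgt (by rw [lev_ng]; omega) (by rw [lev_ng])
      have := A_rest N ψ hgins hth.1
      rw [if_pos hth.2] at this
      rw [show (ins (ng N j) t).length = t.length + 1 from ins_length _ _] at this
      simpa using this

def Sval : List Lam → ℤ := fun l => (l.map (fun a => if lev a = N - 1 then sec a else 0)).sum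

lemma Sval_perm {l l' : List Lam} (h : l.Perm l') : Sval N l = Sval N l' :=
  (h.map _).sum_eq

lemma Sval_cons_ng (j : ℕ) (l : List Lam) :
    Sval N (ng N j :: l) = (j : ℤ) + Sval N l := by
  simp [Sval, ng, lev, sec]

lemma nophi (hN : 1 ≤ N) (hcq : c q ≠ 0) {w : MG} (hw : w ∈ G N) :
    phiE N ψ q c w ≠ sg [] := by
  intro hcontra
  have hw0 : w ≠ 0 := by
    intro h0
    rw [h0, map_zero] at hcontra
    have h1 : (0 : MG) ([] : List Lam) = sg [] ([] : List Lam) := by rw [hcontra]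
    simp [sg] at h1
  have hsupp : w.support.Nonempty := Finsupp.support_nonempty_iff.mpr hw0
  have himgne : (w.support.image List.length).Nonempty := hsupp.image _
  set dd := (w.support.image List.length).max' himgne with hdd
  set T := w.support.filter (fun l => l.length = dd) with hT
  have hTne : T.Nonempty := by
    obtain ⟨l₀, hl₀, hlen₀⟩ := Finset.mem_image.mp
      (Finset.max'_mem (w.support.image List.length) himgne)
    exact ⟨l₀, Finset.mem_filter.mpr ⟨hl₀, hlen₀⟩⟩
  obtain ⟨lst, hlstT, hmax⟩ := Finset.exists_max_image T (Sval N) hTne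
  have hlst_supp : lst ∈ w.support := (Finset.mem_filter.mp hlstT).1
  have hlst_len : lst.length = dd := (Finset.mem_filter.mp hlstT).2
  have hglst : goodL N lst := (Finsupp.mem_supported ℂ w).mp hw hlst_supp
  set Ls := ins (ng N q) lst with hLs
  have hLslen : Ls.length = dd + 1 := by rw [hLs, ins_length, hlst_len]
  have hlenle : ∀ l ∈ w.support, l.length ≤ dd := fun l hl =>
    Finset.le_max' _ _ (Finset.mem_image_of_mem _ hl)
  -- the key claim
  have claim : ∀ l ∈ w.support, ∀ j ∈ Finset.range (q + 1),
      ins (ng N j) l = Ls → l = lst ∧ j = q := by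
    intro l hl j hj heq
    have hgl : goodL N l := (Finsupp.mem_supported ℂ w).mp hw hl
    have hperm : (ng N j :: l).Perm (ng N q :: lst) := by
      refine ((List.perm_orderedInsert rge (ng N j) l).symm.trans ?_)
      rw [show orderedInsert rge (ng N j) l = ins (ng N j) l from rfl, heq, hLs]
      exact List.perm_orderedInsert rge (ng N q) lst
    have hlen : l.length = lst.length := by
      have := hperm.length_eq
      simp only [List.length_cons] at this
      omega
    have hlT : l ∈ T := Finset.mem_filter.mpr ⟨hl, by rw [hlen, hlst_len]⟩
    have hSv := Sval_perm N hperm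
    rw [Sval_cons_ng, Sval_cons_ng] at hSv
    have hSle : Sval N l ≤ Sval N lst := hmax l hlT
    have hjq : j ≤ q := by
      have := Finset.mem_range.mp hj
      omega
    have hjeq : j = q := by omega
    subst hjeq
    have hSveq : Sval N l = Sval N lst := by omega
    have hpl : l.Perm lst := hperm.cons_inv
    exact ⟨List.Perm.eq_of_pairwise' hgl.1 hglst.1 hpl, rfl⟩
  -- evaluate both sides at Ls
  have hterm : ∀ l ∈ w.support, (actL N ψ q c l) Ls = if l = lst then c q else 0 := by
    intro l hl
    have hgl : goodL N l := (Finsupp.mem_supported ℂ w).mp hw hl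
    have hTTl := TT N ψ q c hN l hgl
    set R := phiE N ψ q c (sg l)
      - (∑ j ∈ Finset.range (q + 1), c j • sg (ins (ng N j) l)) with hRd
    have hact : actL N ψ q c l
        = (∑ j ∈ Finset.range (q + 1), c j • sg (ins (ng N j) l)) + R := by
      rw [hRd, ← phiE_sg N ψ q c l]; abel
    have hRLs : R Ls = 0 := by
      by_contra hne
      have hmem := (Finsupp.mem_supported ℂ R).mp hTTl
        (Finsupp.mem_support_iff.mpr hne)
      have := hmem.2
      have h2 := hlenle l hl
      omega
    rw [hact, Finsupp.add_apply, hRLs, add_zero, Finset.sum_apply']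
    by_cases hll : l = lst
    · subst hll
      rw [Finset.sum_eq_single q]
      · rw [if_pos rfl, Finsupp.smul_apply, ← hLs, sg, Finsupp.single_apply,
          if_pos rfl, smul_eq_mul, mul_one]
      · intro j hj hjq
        rw [Finsupp.smul_apply, sg, Finsupp.single_apply,
          if_neg (fun hc => hjq ((claim l hl j hj hc).2)), smul_zero]
      · intro hq
        exact absurd (Finset.self_mem_range_succ q) hq
    · rw [if_neg hll]
      refine Finset.sum_eq_zero fun j hj => ?_
      rw [Finsupp.smul_apply, sg, Finsupp.single_apply,
        if_neg (fun hc => hll ((claim l hl j hj hc).1)), smul_zero]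
  have hval : phiE N ψ q c w Ls = w lst * c q := by
    rw [phiE, Finsupp.linearCombination_apply, Finsupp.sum_apply, Finsupp.sum]
    rw [Finset.sum_eq_single lst ?h1 ?h2]
    · rw [Finsupp.smul_apply, hterm lst hlst_supp, if_pos rfl, smul_eq_mul]
    case h1 =>
      intro l hl hll
      rw [Finsupp.smul_apply, hterm l hl, if_neg hll, smul_zero]
    case h2 =>
      intro habs
      exact absurd hlst_supp habs
  rw [hcontra] at hval
  have hLsne : ([] : List Lam) ≠ Ls := by
    intro hc
    have := hLslen
    rw [← hc] at this
    simp at this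
  rw [sg, Finsupp.single_apply, if_neg hLsne] at hval
  exact (mul_ne_zero (Finsupp.mem_support_iff.mp hlst_supp) hcq) hval.symm


lemma uE_apply_q : uE N q c [ng N q] = c q := by
  rw [show uE N q c = ∑ j ∈ Finset.range (q + 1), c j • sg [ng N j] from rfl,
    Finset.sum_apply']
  rw [Finset.sum_eq_single q]
  · rw [Finsupp.smul_apply, sg, Finsupp.single_apply, if_pos rfl, smul_eq_mul, mul_one]
  · intro j hj hjq
    have hne : [ng N j] ≠ [ng N q] := by
      intro hc
      apply hjq
      have h1 : ng N j = ng N q := by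
        simpa using hc
      have h2 : (j : ℤ) = (q : ℤ) := congrArg (fun a => sec a) h1
      exact_mod_cast h2
    rw [Finsupp.smul_apply, sg, Finsupp.single_apply, if_neg hne, smul_zero]
  · intro hq
    exact absurd (Finset.self_mem_range_succ q) hq

lemma uE_ne_zero (hcq : c q ≠ 0) : uE N q c ≠ 0 := by
  intro h0
  have := uE_apply_q N q c
  rw [h0] at this
  simp only [Finsupp.coe_zero, Pi.zero_apply] at this
  exact hcq this.symm

def ARp (p : {p : ℤ × ℤ // -1 ≤ p.1}) : ↥(G N) →ₗ[ℂ] ↥(G N) :=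
  (A N ψ (toLex p.1)).restrict (fun w hw => A_mem_G N ψ p.2 hw)

lemma ARp_apply (p : {p : ℤ × ℤ // -1 ≤ p.1}) (w : ↥(G N)) :
    (ARp N ψ p w : MG) = A N ψ (toLex p.1) (w : MG) := rfl

lemma jacR1 (hN : 1 ≤ N)
    (hψ : ∀ n m k l : ℤ, N ≤ n → N ≤ m → ((m - n : ℤ) : ℂ) * ψ (n + m) (k + l) = 0)
    {n m k l : ℤ} (hn : -1 ≤ n) (hm : -1 ≤ m) (hnm : -1 ≤ n + m) (w : ↥(G N)) :
    ARp N ψ ⟨(n, k), hn⟩ (ARp N ψ ⟨(m, l), hm⟩ w)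
      - ARp N ψ ⟨(m, l), hm⟩ (ARp N ψ ⟨(n, k), hn⟩ w)
      = ((m - n : ℤ) : ℂ) • ARp N ψ ⟨(n + m, k + l), hnm⟩ w := by
  apply Subtype.ext
  have hJ := jacobi_mod N ψ hN hψ (x := toLex (n, k)) (y := toLex (m, l)) hn hm w.2
  rw [Azn_sg_of_le N ψ (z := comb (toLex (n, k)) (toLex (m, l))) hnm] at hJ
  rw [Submodule.coe_sub, SetLike.val_smul, ARp_apply, ARp_apply, ARp_apply, ARp_apply,
    ARp_apply]
  exact hJ

lemma jacR0 (hN : 1 ≤ N)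
    (hψ : ∀ n m k l : ℤ, N ≤ n → N ≤ m → ((m - n : ℤ) : ℂ) * ψ (n + m) (k + l) = 0)
    {n m k l : ℤ} (hn : -1 ≤ n) (hm : -1 ≤ m) (hnm : ¬ -1 ≤ n + m) (w : ↥(G N)) :
    ARp N ψ ⟨(n, k), hn⟩ (ARp N ψ ⟨(m, l), hm⟩ w)
      - ARp N ψ ⟨(m, l), hm⟩ (ARp N ψ ⟨(n, k), hn⟩ w) = 0 := by
  apply Subtype.ext
  have hJ := jacobi_mod N ψ hN hψ (x := toLex (n, k)) (y := toLex (m, l)) hn hm w.2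
  have hz : ((lev (toLex (m, l)) - lev (toLex (n, k)) : ℤ) : ℂ) = 0 := by
    have h1 : n = -1 ∧ m = -1 := by constructor <;> omega
    show ((m - n : ℤ) : ℂ) = 0
    rw [h1.1, h1.2]; simp
  rw [hz, zero_smul] at hJ
  rw [Submodule.coe_sub, ARp_apply, ARp_apply, ARp_apply, ARp_apply]
  exact hJ

end
end S9

def IsExpPoly (φ : ℤ → ℂ) : Prop :=
  ∃ (s : Finset (ℕ × ℂ)) (c : ℕ × ℂ → ℂ),
    (∀ p ∈ s, p.2 ≠ 0) ∧
    ∀ n : ℤ, φ n = ∑ p ∈ s, c p * (n : ℂ) ^ p.1 * p.2 ^ n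

/-- Let `ψ : g_{≥N} → ℂ` be a Whittaker function for the loop Witt
algebra with `ψ_{2N-1}, ψ_{2N} ∈ E`, and let `c(t) = Σ_{j=0}^q c_j t^j` be a nonzero
polynomial of degree `q ≥ 1` lying in `Ann(ψ_{2N-1}) ∩ Ann(ψ_{2N})`.  Then in the
universal Whittaker module `W(g_{≥N}, ψ)` (characterized here by cyclicity and its
universal property), the vector `u = Σ_j c_j (d_{N-1} ⊗ t^j) v_ψ` generates a
proper nonzero submodule; in particular `W(g_{≥N}, ψ)` is reducible. -/
theorem stmt9     (g : Type*) [LieRing g] [LieAlgebra ℂ g]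
    (D : ℤ → ℤ → g)
    (hli : LinearIndependent ℂ (fun p : {q : ℤ × ℤ // -1 ≤ q.1} => D p.1.1 p.1.2))
    (hspan : Submodule.span ℂ
      (Set.range fun p : {q : ℤ × ℤ // -1 ≤ q.1} => D p.1.1 p.1.2) = ⊤)
    (hbra : ∀ n m k l : ℤ, -1 ≤ n → -1 ≤ m →
      ⁅D n k, D m l⁆ = ((m - n : ℤ) : ℂ) • D (n + m) (k + l))
    (N : ℤ) (hN : 1 ≤ N)
    (ψ : ℤ → ℤ → ℂ)
    (hψhom : ∀ n m k l : ℤ, N ≤ n → N ≤ m → ((m - n : ℤ) : ℂ) * ψ (n + m) (k + l) = 0)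
    (V : Type) [AddCommGroup V] [Module ℂ V] [LieRingModule g V] [LieModule ℂ g V]
    (v : V) (hv : v ≠ 0)
    (hwhit : ∀ n k : ℤ, N ≤ n → ⁅D n k, v⁆ = ψ n k • v)
    (hgen : ∀ W : LieSubmodule ℂ g V, v ∈ W → W = ⊤)
    (huniv : ∀ (V' : Type) [AddCommGroup V'] [Module ℂ V'] [LieRingModule g V']
      [LieModule ℂ g V'] (v' : V'),
      (∀ n k : ℤ, N ≤ n → ⁅D n k, v'⁆ = ψ n k • v') →
      ∃ f : V →ₗ[ℂ] V', f v = v' ∧ ∀ (x : g) (u : V), f ⁅x, u⁆ = ⁅x, f u⁆)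
    (hE1 : IsExpPoly (ψ (2 * N - 1))) (hE2 : IsExpPoly (ψ (2 * N)))
    (q : ℕ) (hq : 1 ≤ q) (c : ℕ → ℂ) (hcq : c q ≠ 0)
    (hann1 : ∀ n : ℤ, ∑ j ∈ Finset.range (q + 1), c j * ψ (2 * N - 1) (n + (j : ℤ)) = 0)
    (hann2 : ∀ n : ℤ, ∑ j ∈ Finset.range (q + 1), c j * ψ (2 * N) (n + (j : ℤ)) = 0) :
    LieSubmodule.lieSpan ℂ g
        {∑ j ∈ Finset.range (q + 1), c j • ⁅D (N - 1) (j : ℤ), v⁆} ≠ ⊥ ∧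
    LieSubmodule.lieSpan ℂ g
        {∑ j ∈ Finset.range (q + 1), c j • ⁅D (N - 1) (j : ℤ), v⁆} ≠ ⊤ := by
  classical
  have hpsi0 : ∀ s' k' : ℤ, 2 * N + 1 ≤ s' → ψ s' k' = 0 := by
    intro s' k' hs'
    have h3 := hψhom N (s' - N) k' 0 le_rfl (by omega)
    rw [show N + (s' - N) = s' by ring, add_zero] at h3
    rcases mul_eq_zero.mp h3 with h4 | h4
    · exfalso
      have h5 : (s' - N - N : ℤ) = 0 := by exact_mod_cast h4
      omega
    · exact h4
  have hA : ∀ s k : ℤ, N ≤ s →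
      ∑ j ∈ Finset.range (q + 1), c j * ψ (s + (N - 1)) (k + j) = 0 := by
    intro s k hs
    rcases eq_or_lt_of_le hs with h1 | h1
    · rw [show s + (N - 1) = 2 * N - 1 by omega]
      exact hann1 k
    rcases eq_or_lt_of_le (show N + 1 ≤ s by omega) with h2 | h2
    · rw [show s + (N - 1) = 2 * N by omega]
      exact hann2 k
    · refine Finset.sum_eq_zero fun j _ => ?_
      rw [hpsi0 _ _ (by omega), mul_zero]
  -- the representation on the concrete module
  let bas : Module.Basis {p : ℤ × ℤ // -1 ≤ p.1} ℂ g := Module.Basis.mk hli (by rw [hspan])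
  have hbas : ∀ p : {p : ℤ × ℤ // -1 ≤ p.1}, bas p = D p.1.1 p.1.2 :=
    fun p => Module.Basis.mk_apply _ _ _
  let ρ : g →ₗ[ℂ] (↥(S9.G N) →ₗ[ℂ] ↥(S9.G N)) := bas.constr ℂ (fun p => S9.ARp N ψ p)
  have hρD : ∀ (n k : ℤ) (hn : -1 ≤ n), ρ (D n k) = S9.ARp N ψ ⟨(n, k), hn⟩ := by
    intro n k hn
    have h1 : D n k = bas ⟨(n, k), hn⟩ := (hbas ⟨(n, k), hn⟩).symm
    rw [h1]
    exact bas.constr_basis ℂ _ _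
  have hpair : ∀ (n k : ℤ), -1 ≤ n → ∀ (m l : ℤ), -1 ≤ m →
      ∀ w : ↥(S9.G N), ρ ⁅D n k, D m l⁆ w = ρ (D n k) (ρ (D m l) w) - ρ (D m l) (ρ (D n k) w) := by
    intro n k hn m l hm w
    rw [hbra n m k l hn hm, map_smul, hρD n k hn, hρD m l hm]
    by_cases hnm : -1 ≤ n + m
    · rw [hρD (n + m) (k + l) hnm, LinearMap.smul_apply]
      exact (S9.jacR1 N ψ hN hψhom hn hm hnm w).symm
    · have hc0 : ((m - n : ℤ) : ℂ) = 0 := by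
        have h1 : n = -1 ∧ m = -1 := by constructor <;> omega
        rw [h1.1, h1.2]; simp
      rw [hc0, zero_smul, LinearMap.zero_apply]
      exact (S9.jacR0 N ψ hN hψhom hn hm hnm w).symm
  have key : ∀ (a b : g) (w : ↥(S9.G N)),
      ρ ⁅a, b⁆ w = ρ a (ρ b w) - ρ b (ρ a w) := by
    intro a b
    have hb : b ∈ Submodule.span ℂ
        (Set.range fun p : {q : ℤ × ℤ // -1 ≤ q.1} => D p.1.1 p.1.2) := by
      rw [hspan]; trivial
    induction hb using Submodule.span_induction with
    | mem x hx =>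
      obtain ⟨p, rfl⟩ := hx
      have ha : a ∈ Submodule.span ℂ
          (Set.range fun p : {q : ℤ × ℤ // -1 ≤ q.1} => D p.1.1 p.1.2) := by
        rw [hspan]; trivial
      induction ha using Submodule.span_induction with
      | mem y hy =>
        obtain ⟨p', rfl⟩ := hy
        exact hpair p'.1.1 p'.1.2 p'.2 p.1.1 p.1.2 p.2
      | zero =>
        intro w
        simp only [zero_lie, map_zero, LinearMap.zero_apply]
        module
      | add y z hy hz ihy ihz =>
        intro w
        simp only [add_lie, map_add, LinearMap.add_apply]
        rw [ihy w, ihz w]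
        abel
      | smul t y hy ihy =>
        intro w
        simp only [smul_lie, map_smul, LinearMap.smul_apply, LinearMap.map_smul]
        rw [ihy w]
        module
    | zero =>
      intro w
      simp only [lie_zero, map_zero, LinearMap.zero_apply]
      module
    | add y z hy hz ihy ihz =>
      intro w
      simp only [lie_add, map_add, LinearMap.add_apply]
      rw [ihy w, ihz w]
      abel
    | smul t y hy ihy =>
      intro w
      simp only [lie_smul, map_smul, LinearMap.smul_apply, LinearMap.map_smul]
      rw [ihy w]
      module
  letI instLRM : LieRingModule g ↥(S9.G N) :=
    { bracket := fun x m => ρ x m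
      add_lie := fun x y m => by simp only [map_add, LinearMap.add_apply]
      lie_add := fun x m n => by simp only [map_add]
      leibniz_lie := fun x y m => by
        have h1 := key x y m
        show ρ x (ρ y m) = ρ ⁅x, y⁆ m + ρ y (ρ x m)
        rw [h1]; abel }
  letI instLM : LieModule ℂ g ↥(S9.G N) :=
    { smul_lie := fun t x m => by
        show ρ (t • x) m = t • ρ x m
        rw [map_smul]; rfl
      lie_smul := fun t x m => by
        show ρ x (t • m) = t • ρ x m
        rw [map_smul] }
  let vM : ↥(S9.G N) := ⟨S9.sg [], S9.sg_mem_G N (S9.goodL_nil N)⟩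
  have hwhitM : ∀ n k : ℤ, N ≤ n → ⁅D n k, vM⁆ = ψ n k • vM := by
    intro n k hn
    show ρ (D n k) vM = ψ n k • vM
    rw [hρD n k (by omega)]
    apply Subtype.ext
    rw [S9.ARp_apply]
    show S9.A N ψ (toLex (n, k)) (S9.sg []) = ((ψ n k • vM : ↥(S9.G N)) : S9.MG)
    rw [S9.A_nil_high N ψ (show N ≤ S9.lev (toLex (n, k)) from hn)]
    rfl
  obtain ⟨f, hfv, hfe⟩ := huniv ↥(S9.G N) vM hwhitM
  set u := ∑ j ∈ Finset.range (q + 1), c j • ⁅D (N - 1) (j : ℤ), v⁆ with hu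
  have hbr : ∀ j : ℕ, ⁅D (N - 1) (j : ℤ), vM⁆
      = (⟨S9.sg [S9.ng N j], S9.sg_mem_G N (S9.good_ng N hN j)⟩ : ↥(S9.G N)) := by
    intro j
    show ρ (D (N - 1) (j : ℤ)) vM = _
    rw [hρD (N - 1) (j : ℤ) (by omega)]
    apply Subtype.ext
    rw [S9.ARp_apply]
    show S9.A N ψ (toLex (N - 1, (j : ℤ))) (S9.sg []) = S9.sg [S9.ng N j]
    rw [S9.A_direct N ψ (show S9.lev (toLex (N - 1, (j : ℤ))) ≤ N - 1 from le_refl _)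
      (by simp)]
    rfl
  have hfu : ((f u : ↥(S9.G N)) : S9.MG) = S9.uE N q c := by
    have h1 : f u = ∑ j ∈ Finset.range (q + 1), c j • ⁅(D (N - 1) (j : ℤ) : g), f v⁆ := by
      rw [hu, map_sum]
      exact Finset.sum_congr rfl fun j _ => by rw [map_smul, hfe]
    rw [h1, hfv]
    have h2 : ∀ j ∈ Finset.range (q + 1), c j • ⁅(D (N - 1) (j : ℤ) : g), vM⁆
        = c j • (⟨S9.sg [S9.ng N j], S9.sg_mem_G N (S9.good_ng N hN j)⟩ : ↥(S9.G N)) :=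
      fun j _ => by rw [hbr j]
    rw [Finset.sum_congr rfl h2]
    rw [show ((∑ j ∈ Finset.range (q + 1), c j •
        (⟨S9.sg [S9.ng N j], S9.sg_mem_G N (S9.good_ng N hN j)⟩ : ↥(S9.G N)) : ↥(S9.G N)) : S9.MG)
      = (S9.G N).subtype (∑ j ∈ Finset.range (q + 1), c j •
        (⟨S9.sg [S9.ng N j], S9.sg_mem_G N (S9.good_ng N hN j)⟩ : ↥(S9.G N))) from rfl]
    rw [map_sum]
    rfl
  constructor
  · intro hbot
    have humem : u ∈ LieSubmodule.lieSpan ℂ g {u} :=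
      LieSubmodule.subset_lieSpan (Set.mem_singleton u)
    rw [hbot] at humem
    have hu0 : u = 0 := (LieSubmodule.mem_bot _).mp humem
    have h0 : ((f u : ↥(S9.G N)) : S9.MG) = 0 := by rw [hu0, map_zero]; rfl
    rw [hfu] at h0
    exact S9.uE_ne_zero N q c hcq h0
  · intro htop
    set RgSub : Submodule ℂ S9.MG := Submodule.map (S9.phiE N ψ q c) (S9.G N) with hRg
    have hstab : ∀ (x : g), ∀ m : ↥(S9.G N), (m : S9.MG) ∈ RgSub →
        ((ρ x m : ↥(S9.G N)) : S9.MG) ∈ RgSub := by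
      intro x
      have hx : x ∈ Submodule.span ℂ
          (Set.range fun p : {q : ℤ × ℤ // -1 ≤ q.1} => D p.1.1 p.1.2) := by
        rw [hspan]; trivial
      induction hx using Submodule.span_induction with
      | mem y hy =>
        obtain ⟨p, rfl⟩ := hy
        intro m hm
        obtain ⟨w0, hw0G, hw0e⟩ := hm
        rw [hρD p.1.1 p.1.2 p.2, S9.ARp_apply]
        refine ⟨S9.A N ψ (toLex p.1) w0, S9.A_mem_G N ψ p.2 hw0G, ?_⟩
        rw [S9.Cmod N ψ q c hN hψhom hA (x := toLex p.1) p.2 hw0G, hw0e]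
      | zero =>
        intro m _
        simp only [map_zero, LinearMap.zero_apply]
        exact RgSub.zero_mem
      | add y z hy hz ihy ihz =>
        intro m hm
        rw [map_add, LinearMap.add_apply]
        exact RgSub.add_mem (ihy m hm) (ihz m hm)
      | smul t y hy ihy =>
        intro m hm
        rw [map_smul, LinearMap.smul_apply]
        exact RgSub.smul_mem t (ihy m hm)
    let P : LieSubmodule ℂ g V :=
      { toSubmodule := Submodule.comap ((S9.G N).subtype ∘ₗ f) RgSub
        lie_mem := by
          intro x w hw
          have hw' : ((f w : ↥(S9.G N)) : S9.MG) ∈ RgSub := hw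
          show ((f ⁅x, w⁆ : ↥(S9.G N)) : S9.MG) ∈ RgSub
          rw [hfe]
          exact hstab x (f w) hw' }
    have hle : LieSubmodule.lieSpan ℂ g {u} ≤ P := by
      rw [LieSubmodule.lieSpan_le]
      intro z hz
      rw [Set.mem_singleton_iff] at hz; subst hz
      show ((f u : ↥(S9.G N)) : S9.MG) ∈ RgSub
      refine ⟨S9.sg [], S9.sg_mem_G N (S9.goodL_nil N), ?_⟩
      rw [S9.phiE_sg, S9.actL_nil, hfu]
    have hv' : v ∈ P := by
      have hmem : v ∈ LieSubmodule.lieSpan ℂ g {u} := by rw [htop]; trivial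
      exact hle hmem
    obtain ⟨w0, hw0G, hw0e⟩ := hv'
    rw [LinearMap.comp_apply, Submodule.subtype_apply, hfv] at hw0e
    exact S9.nophi N ψ q c hN hcq hw0G hw0e
end

section
/- Let ψ: g_{≥N} → C be a Whittaker function with ψ_{2N−1}, ψ_{2N} ∈ E. For any f_1(t), ..., f_s(t) ∈ Ann(ψ_{2N−1}) ∩ Ann(ψ_{2N}), the vector Π_{j=1}^s (d_{N−1} ⊗ f_j(t)) v_ψ is a Whittaker vector of W(g_{≥N}, ψ): it satisfies (d_n ⊗ t^k).w = ψ(d_n ⊗ t^k) w for all n ≥ N, k ∈ Z. -/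
/-- Let `ψ : g_{≥N} → ℂ` be a Whittaker function for the loop Witt
algebra with `ψ_{2N-1}, ψ_{2N} ∈ E`.  For Laurent polynomials
`f_1, …, f_s ∈ Ann(ψ_{2N-1}) ∩ Ann(ψ_{2N})` (encoded as `f j : ℤ →₀ ℂ`), the vector
`Π_{j=1}^s (d_{N-1} ⊗ f_j) v_ψ` is a Whittaker vector of `W(g_{≥N}, ψ)`:
`(d_n ⊗ t^k)` acts on it by `ψ n k` for all `n ≥ N`, `k ∈ ℤ`. -/
theorem stmt12     (g : Type*) [LieRing g] [LieAlgebra ℂ g]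
    (D : ℤ → ℤ → g)
    (hli : LinearIndependent ℂ (fun p : {q : ℤ × ℤ // -1 ≤ q.1} => D p.1.1 p.1.2))
    (hspan : Submodule.span ℂ
      (Set.range fun p : {q : ℤ × ℤ // -1 ≤ q.1} => D p.1.1 p.1.2) = ⊤)
    (hbra : ∀ n m k l : ℤ, -1 ≤ n → -1 ≤ m →
      ⁅D n k, D m l⁆ = ((m - n : ℤ) : ℂ) • D (n + m) (k + l))
    (N : ℤ) (hN : 1 ≤ N)
    (ψ : ℤ → ℤ → ℂ)
    (hψhom : ∀ n m k l : ℤ, N ≤ n → N ≤ m → ((m - n : ℤ) : ℂ) * ψ (n + m) (k + l) = 0)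
    (V : Type) [AddCommGroup V] [Module ℂ V] [LieRingModule g V] [LieModule ℂ g V]
    (v : V) (hv : v ≠ 0)
    (hwhit : ∀ n k : ℤ, N ≤ n → ⁅D n k, v⁆ = ψ n k • v)
    (hgen : ∀ W : LieSubmodule ℂ g V, v ∈ W → W = ⊤)
    (huniv : ∀ (V' : Type) [AddCommGroup V'] [Module ℂ V'] [LieRingModule g V']
      [LieModule ℂ g V'] (v' : V'),
      (∀ n k : ℤ, N ≤ n → ⁅D n k, v'⁆ = ψ n k • v') →
      ∃ f : V →ₗ[ℂ] V', f v = v' ∧ ∀ (x : g) (u : V), f ⁅x, u⁆ = ⁅x, f u⁆)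
    (hE1 : IsExpPoly (ψ (2 * N - 1))) (hE2 : IsExpPoly (ψ (2 * N)))
    (s : ℕ) (f : Fin s → (ℤ →₀ ℂ))
    (hann1 : ∀ (j : Fin s) (n : ℤ), ((f j).sum fun m a => a * ψ (2 * N - 1) (n + m)) = 0)
    (hann2 : ∀ (j : Fin s) (n : ℤ), ((f j).sum fun m a => a * ψ (2 * N) (n + m)) = 0) :
    ∀ n k : ℤ, N ≤ n →
      ⁅D n k, (List.ofFn f).foldr
          (fun fj u => fj.sum fun m a => a • ⁅D (N - 1) m, u⁆) v⁆ =
        ψ n k • (List.ofFn f).foldr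
          (fun fj u => fj.sum fun m a => a • ⁅D (N - 1) m, u⁆) v := by

  have hψzero : ∀ i r : ℤ, 2 * N + 1 ≤ i → ψ i r = 0 := by
    intro i r hi
    have h := hψhom N (i - N) 0 r le_rfl (by omega)
    have hne : ((i - N - N : ℤ) : ℂ) ≠ 0 := by
      simp only [ne_eq, Int.cast_eq_zero]; omega
    have h0 : ψ (N + (i - N)) (0 + r) = 0 := by
      rcases mul_eq_zero.mp h with h' | h'
      · exact absurd h' hne
      · exact h'
    simpa using h0
  have step : ∀ (fj : ℤ →₀ ℂ),
      (∀ r : ℤ, (fj.sum fun m a => a * ψ (2 * N - 1) (r + m)) = 0) →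
      (∀ r : ℤ, (fj.sum fun m a => a * ψ (2 * N) (r + m)) = 0) →
      ∀ u : V, (∀ n k : ℤ, N ≤ n → ⁅D n k, u⁆ = ψ n k • u) →
      ∀ n k : ℤ, N ≤ n →
        ⁅D n k, fj.sum fun m a => a • ⁅D (N - 1) m, u⁆⁆ =
          ψ n k • fj.sum fun m a => a • ⁅D (N - 1) m, u⁆ := by
    intro fj h1 h2 u hu n k hn
    have hn1 : (-1 : ℤ) ≤ n := by omega
    have hN1 : (-1 : ℤ) ≤ N - 1 := by omega
    have hterm : ∀ m ∈ fj.support,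
        ⁅D n k, fj m • ⁅D (N - 1) m, u⁆⁆ =
          (fj m * ((N - 1 - n : ℤ) : ℂ) * ψ (n + (N - 1)) (k + m)) • u +
            ψ n k • (fj m • ⁅D (N - 1) m, u⁆) := by
      intro m _
      rw [lie_smul, leibniz_lie, hbra n (N - 1) k m hn1 hN1, smul_lie,
        hu (n + (N - 1)) (k + m) (by omega), hu n k hn, lie_smul]
      module
    have hcoef : (∑ m ∈ fj.support, fj m * ((N - 1 - n : ℤ) : ℂ) * ψ (n + (N - 1)) (k + m)) = 0 := by
      rcases eq_or_lt_of_le hn with h | h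
      · -- n = N
        have hs := h1 k
        simp only [Finsupp.sum] at hs
        calc (∑ m ∈ fj.support, fj m * ((N - 1 - n : ℤ) : ℂ) * ψ (n + (N - 1)) (k + m))
            = ((N - 1 - n : ℤ) : ℂ) * ∑ m ∈ fj.support, fj m * ψ (2 * N - 1) (k + m) := by
              rw [Finset.mul_sum]
              refine Finset.sum_congr rfl fun m _ => ?_
              have : n + (N - 1) = 2 * N - 1 := by omega
              rw [this]; ring
          _ = 0 := by rw [hs, mul_zero]
      · rcases eq_or_lt_of_le (show N + 1 ≤ n by omega) with h' | h'
        · -- n = N + 1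
          have hs := h2 k
          simp only [Finsupp.sum] at hs
          calc (∑ m ∈ fj.support, fj m * ((N - 1 - n : ℤ) : ℂ) * ψ (n + (N - 1)) (k + m))
              = ((N - 1 - n : ℤ) : ℂ) * ∑ m ∈ fj.support, fj m * ψ (2 * N) (k + m) := by
                rw [Finset.mul_sum]
                refine Finset.sum_congr rfl fun m _ => ?_
                have : n + (N - 1) = 2 * N := by omega
                rw [this]; ring
            _ = 0 := by rw [hs, mul_zero]
        · -- n ≥ N + 2
          refine Finset.sum_eq_zero fun m _ => ?_
          rw [hψzero (n + (N - 1)) (k + m) (by omega), mul_zero]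
    simp only [Finsupp.sum]
    have hls := map_sum (LieModule.toEnd ℂ g V (D n k))
      (fun x => fj x • ⁅D (N - 1) x, u⁆) fj.support
    simp only [LieModule.toEnd_apply_apply] at hls
    rw [hls, Finset.sum_congr rfl hterm,
      Finset.sum_add_distrib, ← Finset.sum_smul, hcoef, zero_smul, zero_add,
      ← Finset.smul_sum]
  suffices H : ∀ l : List (ℤ →₀ ℂ),
      (∀ fj ∈ l,
        (∀ r : ℤ, (fj.sum fun m a => a * ψ (2 * N - 1) (r + m)) = 0) ∧
        (∀ r : ℤ, (fj.sum fun m a => a * ψ (2 * N) (r + m)) = 0)) →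
      ∀ n k : ℤ, N ≤ n →
        ⁅D n k, l.foldr (fun fj u => fj.sum fun m a => a • ⁅D (N - 1) m, u⁆) v⁆ =
          ψ n k • l.foldr (fun fj u => fj.sum fun m a => a • ⁅D (N - 1) m, u⁆) v by
    intro n k hn
    refine H (List.ofFn f) ?_ n k hn
    intro fj hfj
    have hr := List.mem_ofFn.mp hfj
    obtain ⟨j, rfl⟩ := hr
    exact ⟨hann1 j, hann2 j⟩
  intro l
  induction l with
  | nil =>
    intro _ n k hn
    simpa using hwhit n k hn
  | cons fj l ih =>
    intro hmem n k hn
    obtain ⟨h1, h2⟩ := hmem fj List.mem_cons_self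
    have hu : ∀ n k : ℤ, N ≤ n →
        ⁅D n k, l.foldr (fun fj u => fj.sum fun m a => a • ⁅D (N - 1) m, u⁆) v⁆ =
          ψ n k • l.foldr (fun fj u => fj.sum fun m a => a • ⁅D (N - 1) m, u⁆) v :=
      fun n k hn => ih (fun g hg => hmem g (List.mem_cons_of_mem _ hg)) n k hn
    simpa only [List.foldr_cons] using step fj h1 h2 _ hu n k hn
end

section
/- Let φ ∈ E be an exp-polynomial Whittaker function for the pair (g, g_{−1}) of the loop Witt algebra. For any f_1(t), ..., f_s(t) ∈ Ann(φ), the vector Π_{i=1}^s (d_0 ⊗ f_i(t)) v_φ is a Whittaker vector of W(g_{−1}, φ): (d_{−1} ⊗ t^k) fixes it according to φ(t^k) for all k ∈ Z. -/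
/-- Let `φ ∈ E` be an exp-polynomial Whittaker function for the pair
`(g, g_{-1})` of the loop Witt algebra.  For any `f_1, …, f_s ∈ Ann(φ)` (encoded as
`f i : ℤ →₀ ℂ`), the vector `Π_{i=1}^s (d_0 ⊗ f_i) v_φ` is a Whittaker vector of
`W(g_{-1}, φ)`: `(d_{-1} ⊗ t^k)` acts on it by `φ(t^k)` for all `k ∈ ℤ`. -/
theorem stmt16     (g : Type*) [LieRing g] [LieAlgebra ℂ g]
    (D : ℤ → ℤ → g)
    (hli : LinearIndependent ℂ (fun p : {q : ℤ × ℤ // -1 ≤ q.1} => D p.1.1 p.1.2))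
    (hspan : Submodule.span ℂ
      (Set.range fun p : {q : ℤ × ℤ // -1 ≤ q.1} => D p.1.1 p.1.2) = ⊤)
    (hbra : ∀ n m k l : ℤ, -1 ≤ n → -1 ≤ m →
      ⁅D n k, D m l⁆ = ((m - n : ℤ) : ℂ) • D (n + m) (k + l))
    (φ : ℤ → ℂ)
    (V : Type) [AddCommGroup V] [Module ℂ V] [LieRingModule g V] [LieModule ℂ g V]
    (v : V) (hv : v ≠ 0)
    (hwhit : ∀ k : ℤ, ⁅D (-1) k, v⁆ = φ k • v)
    (hgen : ∀ W : LieSubmodule ℂ g V, v ∈ W → W = ⊤)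
    (huniv : ∀ (V' : Type) [AddCommGroup V'] [Module ℂ V'] [LieRingModule g V']
      [LieModule ℂ g V'] (v' : V'),
      (∀ k : ℤ, ⁅D (-1) k, v'⁆ = φ k • v') →
      ∃ f : V →ₗ[ℂ] V', f v = v' ∧ ∀ (x : g) (u : V), f ⁅x, u⁆ = ⁅x, f u⁆)
    (hE : IsExpPoly φ)
    (s : ℕ) (f : Fin s → (ℤ →₀ ℂ))
    (hann : ∀ (i : Fin s) (n : ℤ), ((f i).sum fun m a => a * φ (n + m)) = 0) :
    ∀ k : ℤ,
      ⁅D (-1) k, (List.ofFn f).foldr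
          (fun fi u => fi.sum fun m a => a • ⁅D 0 m, u⁆) v⁆ =
        φ k • (List.ofFn f).foldr
          (fun fi u => fi.sum fun m a => a • ⁅D 0 m, u⁆) v := by

  have key : ∀ (L : List (ℤ →₀ ℂ)),
      (∀ fi ∈ L, ∀ n : ℤ, (fi.sum fun m a => a * φ (n + m)) = 0) →
      ∀ k : ℤ, ⁅D (-1) k, L.foldr (fun fi u => fi.sum fun m a => a • ⁅D 0 m, u⁆) v⁆
        = φ k • L.foldr (fun fi u => fi.sum fun m a => a • ⁅D 0 m, u⁆) v := by
    intro L
    induction L with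
    | nil => intro _ k; exact hwhit k
    | cons fi L ih =>
      intro h k
      have hu := ih (fun g hg n => h g (List.mem_cons_of_mem _ hg) n)
      set u := L.foldr (fun fi u => fi.sum fun m a => a • ⁅D 0 m, u⁆) v with hudef
      simp only [List.foldr_cons]
      rw [Finsupp.sum]
      have lsum : ⁅D (-1) k, ∑ m ∈ fi.support, fi m • ⁅D 0 m, u⁆⁆
          = ∑ m ∈ fi.support, ⁅D (-1) k, fi m • ⁅D 0 m, u⁆⁆ :=
        map_sum (LieModule.toEnd ℂ g V (D (-1) k)) _ _
      rw [lsum]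
      have step : ∀ m ∈ fi.support,
          ⁅D (-1) k, fi m • ⁅D 0 m, u⁆⁆
            = (fi m * φ (k + m)) • u + φ k • (fi m • ⁅D 0 m, u⁆) := by
        intro m _
        rw [lie_smul, leibniz_lie, hbra (-1) 0 k m le_rfl (by norm_num), hu k, lie_smul]
        have h1 : ((0 - (-1) : ℤ) : ℂ) = 1 := by norm_num
        rw [h1, one_smul]
        have h2 : (-1 + 0 : ℤ) = -1 := by norm_num
        rw [h2, hu (k + m), smul_add, smul_smul, smul_comm (fi m) (φ k)]
      rw [Finset.sum_congr rfl step, Finset.sum_add_distrib, ← Finset.sum_smul]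
      have hz : (∑ m ∈ fi.support, fi m * φ (k + m)) = 0 := h fi List.mem_cons_self k
      rw [hz, zero_smul, zero_add, ← Finset.smul_sum]
  intro k
  refine key (List.ofFn f) ?_ k
  intro fi hfi n
  obtain ⟨i, rfl⟩ := List.mem_ofFn.mp hfi
  exact hann i n
end
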